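/- arXiv:0810.1705 — 3 statements merged into one kernel-verified Lean document; each statement's English description precedes it below -/
import Mathlib

section
/- Let N, r, k be integers with 1 ≤ r ≤ N and k ≥ 0, and let φ_ν = 2πν/N. Define the r×r symmetric matrix B^{(N)}_{k,r} with entries b_{μν} = U_k(cos(φ_μ − φ_ν)) for 0 ≤ μ, ν ≤ r−1 (so b_{νν} = k+1). Then B^{(N)}_{k,r} is positive semidefinite. -/
open Real

/-- Chebyshev polynomial of the second kind, evaluated at a real number. -/
noncomputable def chebU (k : ℕ) (x : ℝ) : ℝ := (Polynomial.Chebyshev.U ℝ (k : ℤ)).eval x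

/-- The matrix `B^{(N)}_{k,r}` with entries `U_k(cos(φ_μ - φ_ν))`, `φ_ν = 2πν/N`. -/
noncomputable def Bmat (N k r : ℕ) : Matrix (Fin r) (Fin r) ℝ :=
  fun μ ν => chebU k (Real.cos (2 * π * ((μ : ℝ) - (ν : ℝ)) / N))

/-- The matrix `M^{(N)}_{k,r} = I_r - N⁻¹ B^{(N)}_{k,r}`. -/
noncomputable def Mmat (N k r : ℕ) : Matrix (Fin r) (Fin r) ℝ :=
  1 - (N : ℝ)⁻¹ • Bmat N k r

lemma chebU_rec (k : ℕ) (x : ℝ) :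
    chebU (k + 2) x = 2 * x * chebU (k + 1) x - chebU k x := by
  unfold chebU
  have h : ((k + 2 : ℕ) : ℤ) = (k : ℤ) + 2 := by push_cast; ring
  have h1 : ((k + 1 : ℕ) : ℤ) = (k : ℤ) + 1 := by push_cast; ring
  rw [h, h1, Polynomial.Chebyshev.U_add_two]
  simp [Polynomial.eval_mul, Polynomial.eval_sub]

/-- `U_k(cos θ) = Σ_{j=0}^k cos((k-2j)θ)`. -/
lemma chebU_cos_sum (k : ℕ) (θ : ℝ) :
    chebU k (Real.cos θ) =
      ∑ j ∈ Finset.range (k + 1), Real.cos (((k : ℝ) - 2 * j) * θ) := by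
  induction k using Nat.twoStepInduction with
  | zero => simp [chebU]
  | one =>
    simp [chebU, Finset.sum_range_succ]
    rw [show ((1 : ℝ) - 2) * θ = -θ by ring, Real.cos_neg]
    ring
  | more k ih1 ih2 =>
    rw [chebU_rec, ih1, ih2, Finset.mul_sum]
    have key : ∀ j : ℕ,
        2 * Real.cos θ * Real.cos (((k : ℝ) + 1 - 2 * j) * θ) =
          Real.cos (((k : ℝ) + 2 - 2 * j) * θ) + Real.cos (((k : ℝ) - 2 * j) * θ) := by
      intro j
      have e1 : ((k : ℝ) + 2 - 2 * j) * θ = ((k : ℝ) + 1 - 2 * j) * θ + θ := by ring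
      have e2 : ((k : ℝ) - 2 * j) * θ = ((k : ℝ) + 1 - 2 * j) * θ - θ := by ring
      rw [e1, e2, Real.cos_add, Real.cos_sub]; ring
    push_cast
    have hsum : ∑ j ∈ Finset.range (k + 2),
        2 * Real.cos θ * Real.cos (((k : ℝ) + 1 - 2 * j) * θ) =
        ∑ j ∈ Finset.range (k + 2), (Real.cos (((k : ℝ) + 2 - 2 * j) * θ) +
          Real.cos (((k : ℝ) - 2 * j) * θ)) :=
      Finset.sum_congr rfl fun j _ => key j
    rw [hsum, Finset.sum_add_distrib]
    rw [Finset.sum_range_succ (f := fun j => Real.cos (((k : ℝ) - 2 * j) * θ)) (n := k + 1)]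
    rw [Finset.sum_range_succ (f := fun j => Real.cos (((k : ℝ) + 2 - 2 * j) * θ)) (n := k + 2)]
    push_cast
    have : Real.cos (((k : ℝ) - 2 * ((k : ℝ) + 1)) * θ) =
        Real.cos (((k : ℝ) + 2 - 2 * ((k : ℝ) + 2)) * θ) := by
      rw [show ((k : ℝ) - 2 * ((k : ℝ) + 1)) * θ = -(((k : ℝ) + 2) * θ) by ring,
        show ((k : ℝ) + 2 - 2 * ((k : ℝ) + 2)) * θ = -(((k : ℝ) + 2) * θ) by ring]
    rw [this]; ring

lemma Bmat_entry (N k r : ℕ) (μ ν : Fin r) :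
    Bmat N k r μ ν = ∑ j ∈ Finset.range (k + 1),
      (Real.cos (((k : ℝ) - 2 * j) * (2 * π * (μ : ℝ) / N)) *
        Real.cos (((k : ℝ) - 2 * j) * (2 * π * (ν : ℝ) / N)) +
       Real.sin (((k : ℝ) - 2 * j) * (2 * π * (μ : ℝ) / N)) *
        Real.sin (((k : ℝ) - 2 * j) * (2 * π * (ν : ℝ) / N))) := by
  rw [Bmat, chebU_cos_sum]
  refine Finset.sum_congr rfl fun j _ => ?_
  rw [← Real.cos_sub]
  congr 1
  rw [div_eq_mul_inv, div_eq_mul_inv, div_eq_mul_inv]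
  ring

lemma quad_expand {r : ℕ} (x f : Fin r → ℝ) :
    ∑ μ : Fin r, ∑ ν : Fin r, x μ * (f μ * f ν) * x ν = (∑ μ, x μ * f μ) ^ 2 := by
  rw [sq, Finset.sum_mul_sum]
  exact Finset.sum_congr rfl fun μ _ => Finset.sum_congr rfl fun ν _ => by ring

theorem Bmat_posSemidef (N k r : ℕ) (hr : 1 ≤ r) (hrN : r ≤ N) :
    (Bmat N k r).PosSemidef := by
  rw [Matrix.posSemidef_iff_dotProduct_mulVec]
  constructor
  · -- Hermitian
    ext μ ν
    simp only [Matrix.conjTranspose_apply, Bmat, star_trivial]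
    rw [show 2 * π * ((ν : ℝ) - (μ : ℝ)) / N = -(2 * π * ((μ : ℝ) - (ν : ℝ)) / N) by ring,
      Real.cos_neg]
  · intro x
    have hquad : dotProduct (star x) ((Bmat N k r).mulVec x) =
        ∑ j ∈ Finset.range (k + 1),
          ((∑ μ, x μ * Real.cos (((k : ℝ) - 2 * j) * (2 * π * (μ : ℝ) / N))) ^ 2 +
           (∑ μ, x μ * Real.sin (((k : ℝ) - 2 * j) * (2 * π * (μ : ℝ) / N))) ^ 2) := by
      calc dotProduct (star x) ((Bmat N k r).mulVec x)
          = ∑ μ : Fin r, ∑ ν : Fin r, x μ * Bmat N k r μ ν * x ν := by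
            simp only [dotProduct, Matrix.mulVec, Pi.star_apply, star_trivial,
              Finset.mul_sum, mul_assoc]
        _ = ∑ μ : Fin r, ∑ ν : Fin r, ∑ j ∈ Finset.range (k + 1),
              (x μ * (Real.cos (((k : ℝ) - 2 * j) * (2 * π * (μ : ℝ) / N)) *
                Real.cos (((k : ℝ) - 2 * j) * (2 * π * (ν : ℝ) / N))) * x ν +
               x μ * (Real.sin (((k : ℝ) - 2 * j) * (2 * π * (μ : ℝ) / N)) *
                Real.sin (((k : ℝ) - 2 * j) * (2 * π * (ν : ℝ) / N))) * x ν) := by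
            refine Finset.sum_congr rfl fun μ _ => Finset.sum_congr rfl fun ν _ => ?_
            rw [Bmat_entry, Finset.mul_sum, Finset.sum_mul]
            exact Finset.sum_congr rfl fun j _ => by ring
        _ = ∑ j ∈ Finset.range (k + 1), ∑ μ : Fin r, ∑ ν : Fin r,
              (x μ * (Real.cos (((k : ℝ) - 2 * j) * (2 * π * (μ : ℝ) / N)) *
                Real.cos (((k : ℝ) - 2 * j) * (2 * π * (ν : ℝ) / N))) * x ν +
               x μ * (Real.sin (((k : ℝ) - 2 * j) * (2 * π * (μ : ℝ) / N)) *
                Real.sin (((k : ℝ) - 2 * j) * (2 * π * (ν : ℝ) / N))) * x ν) := by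
            exact (Finset.sum_congr rfl fun μ _ => Finset.sum_comm).trans Finset.sum_comm
        _ = ∑ j ∈ Finset.range (k + 1),
              ((∑ μ, x μ * Real.cos (((k : ℝ) - 2 * j) * (2 * π * (μ : ℝ) / N))) ^ 2 +
               (∑ μ, x μ * Real.sin (((k : ℝ) - 2 * j) * (2 * π * (μ : ℝ) / N))) ^ 2) := by
            refine Finset.sum_congr rfl fun j _ => ?_
            rw [← quad_expand x (fun μ => Real.cos (((k : ℝ) - 2 * j) * (2 * π * (μ : ℝ) / N))),
              ← quad_expand x (fun μ => Real.sin (((k : ℝ) - 2 * j) * (2 * π * (μ : ℝ) / N)))]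
            simp [Finset.sum_add_distrib]
    rw [hquad]
    exact Finset.sum_nonneg fun j _ => by positivity
end

section
/- With M^{(N)}_{k,r} = I_r − N^{-1} B^{(N)}_{k,r} as above and 0 ≤ k, r ≤ N−1, the matrix M^{(N)}_{k,r} is positive definite if and only if k + r < N. -/
open Real

/-! ### Auxiliary definitions -/

/-- The complex "Fourier transform at integer frequency `a`" of a complex vector. -/
noncomputable def Gc (N r : ℕ) (z : Fin r → ℂ) (a : ℤ) : ℂ :=
  ∑ μ : Fin r, z μ * Complex.exp (((2 * π * (a : ℝ) * ((μ : ℕ) : ℝ) / (N : ℝ)) : ℝ) * Complex.I)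

/-- Fourier transform of a real vector. -/
noncomputable def Fc (N r : ℕ) (x : Fin r → ℝ) (a : ℤ) : ℂ :=
  Gc N r (fun μ => ((x μ : ℝ) : ℂ)) a

/-- Set of residues `(k - 2j) mod N`, `0 ≤ j ≤ k`. -/
noncomputable def Dset (N k : ℕ) : Finset ℕ :=
  (Finset.range (k+1)).image (fun j : ℕ => ((((k:ℤ) - 2*(j:ℤ)) % (N:ℤ)).toNat))

/-! ### Chebyshev sum formula -/

lemma cheb_rec (k : ℕ) (x : ℝ) :
    chebU (k+2) x = 2 * x * chebU (k+1) x - chebU k x := by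
  have h := Polynomial.Chebyshev.U_add_two ℝ (k : ℤ)
  have hc : ((k+2 : ℕ) : ℤ) = (k : ℤ) + 2 := by push_cast; ring
  have hc1 : ((k+1 : ℕ) : ℤ) = (k : ℤ) + 1 := by push_cast; ring
  simp only [chebU, hc, hc1, h, Polynomial.eval_sub, Polynomial.eval_mul, Polynomial.eval_X,
    Polynomial.eval_ofNat]

lemma cheb_sum : ∀ (k : ℕ) (t : ℝ),
    chebU k (Real.cos t) = ∑ j ∈ Finset.range (k+1), Real.cos (((k:ℝ) - 2*j) * t)
  | 0, t => by
    simp [chebU, Polynomial.Chebyshev.U_zero]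
  | 1, t => by
    rw [Finset.sum_range_succ, Finset.sum_range_one]
    push_cast
    have h1 : ((1:ℝ) - 2*0) * t = t := by ring
    have h2 : ((1:ℝ) - 2*1) * t = -t := by ring
    rw [h1, h2, Real.cos_neg, chebU]
    simp [Polynomial.Chebyshev.U_one]
    ring
  | (k+2), t => by
    have ih1 := cheb_sum (k+1) t
    have ih0 := cheb_sum k t
    rw [cheb_rec, ih1, ih0]
    push_cast
    have key : ∀ j : ℕ, 2 * Real.cos t * Real.cos ((((k:ℝ)+1) - 2*j) * t)
        = Real.cos ((((k:ℝ)+2) - 2*j) * t) + Real.cos (((k:ℝ) - 2*j) * t) := by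
      intro j
      have e1 : (((k:ℝ)+2) - 2*j) * t = (((k:ℝ)+1) - 2*j) * t + t := by ring
      have e2 : (((k:ℝ)) - 2*j) * t = (((k:ℝ)+1) - 2*j) * t - t := by ring
      rw [e1, e2, Real.cos_add, Real.cos_sub]; ring
    have hmul : 2 * Real.cos t * ∑ j ∈ Finset.range (k+2), Real.cos ((((k:ℝ)+1) - 2*j) * t)
        = ∑ j ∈ Finset.range (k+2), (Real.cos ((((k:ℝ)+2) - 2*j) * t)
            + Real.cos (((k:ℝ) - 2*j) * t)) := by
      rw [Finset.mul_sum]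
      exact Finset.sum_congr rfl (fun j _ => key j)
    rw [Finset.sum_add_distrib] at hmul
    have hs1 : ∑ j ∈ Finset.range (k+3), Real.cos ((((k:ℝ)+2) - 2*j) * t)
        = (∑ j ∈ Finset.range (k+2), Real.cos ((((k:ℝ)+2) - 2*j) * t))
          + Real.cos ((((k:ℝ)+2) - 2*(k+2:ℕ)) * t) := by
      rw [Finset.sum_range_succ]
    have hs2 : ∑ j ∈ Finset.range (k+2), Real.cos (((k:ℝ) - 2*j) * t)
        = (∑ j ∈ Finset.range (k+1), Real.cos (((k:ℝ) - 2*j) * t))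
          + Real.cos (((k:ℝ) - 2*(k+1:ℕ)) * t) := by
      rw [Finset.sum_range_succ]
    have hl1 : Real.cos ((((k:ℝ)+2) - 2*(k+2:ℕ)) * t) = Real.cos (((k:ℝ)+2) * t) := by
      push_cast
      rw [show (((k:ℝ)+2) - 2*((k:ℝ)+2)) * t = -((((k:ℝ)+2)) * t) by ring, Real.cos_neg]
    have hl2 : Real.cos (((k:ℝ) - 2*(k+1:ℕ)) * t) = Real.cos (((k:ℝ)+2) * t) := by
      push_cast
      rw [show ((k:ℝ) - 2*((k:ℝ)+1)) * t = -((((k:ℝ)+2)) * t) by ring, Real.cos_neg]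
    rw [hl1] at hs1
    rw [hl2] at hs2
    linarith [hmul, hs1, hs2]

/-! ### Geometric sums of cosines -/

lemma geom_cos (N : ℕ) (hN : 0 < N) (a s d : ℤ) (h : ¬ ((N:ℤ) ∣ s*d)) :
    ∑ i ∈ Finset.range N, Real.cos (((a:ℝ) + (s:ℝ)*(i:ℝ)) * (2*π*(d:ℝ)/(N:ℝ))) = 0 := by
  have hNR : (N:ℝ) ≠ 0 := by exact_mod_cast hN.ne'
  set θ : ℝ := 2*π*(d:ℝ)/(N:ℝ) with hθ
  set z : ℂ := Complex.exp (((s:ℝ) * θ : ℝ) * Complex.I) with hz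
  have hz1 : z ≠ 1 := by
    intro hc
    rw [hz, Complex.exp_eq_one_iff] at hc
    obtain ⟨n, hn⟩ := hc
    have hn2 : ((n:ℂ) * (2*(π:ℂ)*Complex.I)) = (((n:ℝ)*(2*π) : ℝ) : ℂ) * Complex.I := by
      push_cast; ring
    rw [hn2] at hn
    have hr : ((s:ℝ)*θ) = (n:ℝ)*(2*π) := by
      exact_mod_cast mul_right_cancel₀ Complex.I_ne_zero hn
    rw [hθ] at hr
    have h2π : (2*π:ℝ) ≠ 0 := by positivity
    have hr' : (2*π) * ((s:ℝ)*(d:ℝ)) = (2*π) * ((n:ℝ)*(N:ℝ)) := by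
      field_simp at hr
      ring_nf at hr ⊢
      linear_combination (2 * π) * hr
    have : (s:ℝ) * (d:ℝ) = (n:ℝ) * (N:ℝ) := mul_left_cancel₀ h2π hr'
    have hint : (s * d : ℤ) = n * N := by exact_mod_cast this
    exact h ⟨n, by linarith [hint]⟩
  have hzN : z ^ N = 1 := by
    rw [hz, ← Complex.exp_nat_mul]
    have : (N:ℂ) * (((s:ℝ) * θ : ℝ) * Complex.I) = ((s*d : ℤ) : ℂ) * (2*π*Complex.I) := by
      push_cast
      rw [hθ]; push_cast
      have hNC : (N:ℂ) ≠ 0 := by exact_mod_cast hN.ne'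
      field_simp
    rw [this, Complex.exp_int_mul_two_pi_mul_I]
  have key : ∀ i : ℕ, Real.cos (((a:ℝ) + (s:ℝ)*(i:ℝ)) * θ)
      = (Complex.exp (((a:ℝ) * θ : ℝ) * Complex.I) * z ^ i).re := by
    intro i
    rw [hz, ← Complex.exp_nat_mul, ← Complex.exp_add]
    have : ((a:ℝ) * θ : ℝ) * Complex.I + (i:ℂ) * (((s:ℝ) * θ : ℝ) * Complex.I)
        = ((((a:ℝ) + (s:ℝ)*(i:ℝ)) * θ : ℝ) : ℂ) * Complex.I := by
      push_cast; ring
    rw [this, Complex.exp_ofReal_mul_I_re]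
  calc ∑ i ∈ Finset.range N, Real.cos (((a:ℝ) + (s:ℝ)*(i:ℝ)) * θ)
      = (∑ i ∈ Finset.range N, Complex.exp (((a:ℝ) * θ : ℝ) * Complex.I) * z ^ i).re := by
        rw [Complex.re_sum]
        exact Finset.sum_congr rfl (fun i _ => key i)
    _ = (Complex.exp (((a:ℝ) * θ : ℝ) * Complex.I) * ((z ^ N - 1)/(z - 1))).re := by
        rw [← Finset.mul_sum, geom_sum_eq hz1]
    _ = 0 := by rw [hzN]; simp

/-! ### Basic properties of `Gc`/`Fc` -/

lemma Gc_add (N r : ℕ) (z w : Fin r → ℂ) (a : ℤ) :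
    Gc N r (fun μ => z μ + w μ) a = Gc N r z a + Gc N r w a := by
  simp [Gc, add_mul, Finset.sum_add_distrib]

lemma Gc_smul (N r : ℕ) (c : ℂ) (z : Fin r → ℂ) (a : ℤ) :
    Gc N r (fun μ => c * z μ) a = c * Gc N r z a := by
  simp [Gc, Finset.mul_sum, mul_assoc]

lemma Gc_period (N r : ℕ) (hN : 0 < N) (z : Fin r → ℂ) (a t : ℤ) :
    Gc N r z (a + N * t) = Gc N r z a := by
  have hNR : (N:ℝ) ≠ 0 := by exact_mod_cast hN.ne'
  unfold Gc
  refine Finset.sum_congr rfl (fun μ _ => ?_)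
  congr 1
  have harg : (2 * π * ((a + N*t : ℤ) : ℝ) * ((μ:ℕ):ℝ) / (N:ℝ) : ℝ)
      = (2 * π * (a:ℝ) * ((μ:ℕ):ℝ) / (N:ℝ)) + (t * (μ:ℕ) : ℤ) * (2*π) := by
    push_cast
    field_simp
  rw [harg]
  push_cast
  rw [add_mul, Complex.exp_add]
  have : (((t * (μ:ℕ) : ℤ):ℝ):ℂ) * (2*(π:ℂ)) * Complex.I
      = ((t * (μ:ℕ) : ℤ):ℂ) * (2*(π:ℂ)*Complex.I) := by push_cast; ring
  rw [show ((t:ℂ) * ((μ:ℕ):ℂ) * (2*(π:ℂ))) * Complex.I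
      = ((t * (μ:ℕ) : ℤ):ℂ) * (2*(π:ℂ)*Complex.I) by push_cast; ring]
  rw [Complex.exp_int_mul_two_pi_mul_I, mul_one]

lemma Gc_emod (N r : ℕ) (hN : 0 < N) (z : Fin r → ℂ) (a : ℤ) :
    Gc N r z (a % (N:ℤ)) = Gc N r z a := by
  have h := Gc_period N r hN z (a % (N:ℤ)) (a / (N:ℤ))
  rw [Int.emod_add_mul_ediv a (N:ℤ)] at h
  exact h.symm

lemma Gc_congr_mod (N r : ℕ) (hN : 0 < N) (z : Fin r → ℂ) (a b : ℤ)
    (h : a % (N:ℤ) = b % (N:ℤ)) : Gc N r z a = Gc N r z b := by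
  rw [← Gc_emod N r hN z a, h, Gc_emod N r hN z b]

lemma conj_Gc (N r : ℕ) (z : Fin r → ℂ) (a : ℤ) :
    (starRingEnd ℂ) (Gc N r z a) = Gc N r (fun μ => (starRingEnd ℂ) (z μ)) (-a) := by
  unfold Gc
  rw [map_sum]
  refine Finset.sum_congr rfl (fun μ _ => ?_)
  rw [map_mul, ← Complex.exp_conj]
  congr 1
  simp only [map_mul, Complex.conj_I, Complex.conj_ofReal]
  push_cast
  ring

lemma Fc_emod (N r : ℕ) (hN : 0 < N) (x : Fin r → ℝ) (a : ℤ) :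
    Fc N r x (a % (N:ℤ)) = Fc N r x a := Gc_emod N r hN _ a

lemma Fc_res (N r : ℕ) (hN : 0 < N) (x : Fin r → ℝ) (a : ℤ) :
    Fc N r x (((a % (N:ℤ)).toNat : ℕ) : ℤ) = Fc N r x a := by
  rw [Int.toNat_of_nonneg (Int.emod_nonneg a (by exact_mod_cast hN.ne'))]
  exact Fc_emod N r hN x a

/-! ### `normSq` of `Fc` as a double cosine sum -/

lemma normSq_Fc (N r : ℕ) (x : Fin r → ℝ) (a : ℤ) :
    (Complex.normSq (Fc N r x a) : ℝ) =
      ∑ μ : Fin r, ∑ ν : Fin r,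
        x μ * x ν * Real.cos ((a:ℝ) * (2 * π * (((μ:ℕ):ℝ) - ((ν:ℕ):ℝ)) / (N:ℝ))) := by
  have h1 : (Complex.normSq (Fc N r x a) : ℝ)
      = (Fc N r x a * (starRingEnd ℂ) (Fc N r x a)).re := by
    rw [Complex.mul_conj]; simp
  rw [h1]
  have hconj : (starRingEnd ℂ) (Fc N r x a)
      = ∑ ν : Fin r, (x ν : ℂ) * Complex.exp ((-(2 * π * (a : ℝ) * ((ν : ℕ) : ℝ) / (N : ℝ)) : ℝ) * Complex.I) := by
    unfold Fc Gc
    rw [map_sum]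
    refine Finset.sum_congr rfl (fun ν _ => ?_)
    rw [map_mul, ← Complex.exp_conj]
    simp only [map_mul, Complex.conj_I, Complex.conj_ofReal]
    push_cast
    ring_nf
  rw [hconj]
  unfold Fc Gc
  rw [Finset.sum_mul_sum, Complex.re_sum]
  refine Finset.sum_congr rfl (fun μ _ => ?_)
  rw [Complex.re_sum]
  refine Finset.sum_congr rfl (fun ν _ => ?_)
  rw [show ((x μ : ℂ) * Complex.exp (((2 * π * (a : ℝ) * ((μ : ℕ) : ℝ) / (N : ℝ)) : ℝ) * Complex.I))
      * ((x ν : ℂ) * Complex.exp ((-(2 * π * (a : ℝ) * ((ν : ℕ) : ℝ) / (N : ℝ)) : ℝ) * Complex.I))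
      = ((x μ * x ν : ℝ) : ℂ) * (Complex.exp (((2 * π * (a : ℝ) * ((μ : ℕ) : ℝ) / (N : ℝ)) : ℝ) * Complex.I)
          * Complex.exp ((-(2 * π * (a : ℝ) * ((ν : ℕ) : ℝ) / (N : ℝ)) : ℝ) * Complex.I)) by push_cast; ring]
  rw [← Complex.exp_add]
  have harg : (((2 * π * (a : ℝ) * ((μ : ℕ) : ℝ) / (N : ℝ)) : ℝ) : ℂ) * Complex.I
      + ((-(2 * π * (a : ℝ) * ((ν : ℕ) : ℝ) / (N : ℝ)) : ℝ) : ℂ) * Complex.I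
      = (((a:ℝ) * (2 * π * (((μ:ℕ):ℝ) - ((ν:ℕ):ℝ)) / (N:ℝ)) : ℝ) : ℂ) * Complex.I := by
    push_cast
    ring
  rw [harg, Complex.re_ofReal_mul, Complex.exp_ofReal_mul_I_re]

lemma parseval (N r : ℕ) (hN : 0 < N) (hrN : r ≤ N) (x : Fin r → ℝ) :
    ∑ m ∈ Finset.range N, Complex.normSq (Fc N r x (m:ℤ)) = (N:ℝ) * ∑ μ : Fin r, x μ ^ 2 := by
  have key : ∀ μ ν : Fin r, ∑ m ∈ Finset.range N,
      x μ * x ν * Real.cos ((m:ℝ) * (2 * π * (((μ:ℕ):ℝ) - ((ν:ℕ):ℝ)) / (N:ℝ)))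
      = if ν = μ then (N:ℝ) * x μ ^ 2 else 0 := by
    intro μ ν
    by_cases hμν : ν = μ
    · subst hμν
      rw [if_pos rfl]
      simp only [sub_self, mul_zero, zero_div, mul_zero, Real.cos_zero]
      rw [Finset.sum_const, Finset.card_range, nsmul_eq_mul]
      ring
    · rw [if_neg hμν]
      rw [← Finset.mul_sum]
      have hd : ¬ ((N:ℤ) ∣ 1 * ((μ:ℕ) - (ν:ℕ) : ℤ)) := by
        rw [one_mul]
        intro hdvd
        have h1 : ((μ:ℕ) : ℤ) < N := by exact_mod_cast lt_of_lt_of_le μ.2 hrN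
        have h2 : ((ν:ℕ) : ℤ) < N := by exact_mod_cast lt_of_lt_of_le ν.2 hrN
        have hne : ((μ:ℕ) : ℤ) ≠ ((ν:ℕ) : ℤ) := by
          simpa using fun hc => hμν (Fin.ext (by exact_mod_cast hc)).symm
        rcases hdvd with ⟨c, hc⟩
        have hν0 : (0:ℤ) ≤ ((ν:ℕ) : ℤ) := Int.natCast_nonneg _
        have hμ0 : (0:ℤ) ≤ ((μ:ℕ) : ℤ) := Int.natCast_nonneg _
        rcases (by omega : c = 0 ∨ 1 ≤ c ∨ c ≤ -1) with hc0 | hc0 | hc0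
        · rw [hc0, mul_zero] at hc; apply hne; omega
        · have : (N:ℤ) ≤ N * c := le_mul_of_one_le_right (by positivity) hc0
          omega
        · have : N * c ≤ -(N:ℤ) := by nlinarith
          omega
      have hg := geom_cos N hN 0 1 ((μ:ℕ) - (ν:ℕ) : ℤ) hd
      have : ∑ m ∈ Finset.range N, Real.cos ((m:ℝ) * (2 * π * (((μ:ℕ):ℝ) - ((ν:ℕ):ℝ)) / (N:ℝ))) = 0 := by
        rw [← hg]
        refine Finset.sum_congr rfl (fun m _ => ?_)
        congr 1
        push_cast
        ring
      rw [this, mul_zero]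
  calc ∑ m ∈ Finset.range N, Complex.normSq (Fc N r x (m:ℤ))
      = ∑ m ∈ Finset.range N, ∑ μ : Fin r, ∑ ν : Fin r,
          x μ * x ν * Real.cos (((m:ℤ):ℝ) * (2 * π * (((μ:ℕ):ℝ) - ((ν:ℕ):ℝ)) / (N:ℝ))) := by
        exact Finset.sum_congr rfl (fun m _ => normSq_Fc N r x m)
    _ = ∑ μ : Fin r, ∑ ν : Fin r, ∑ m ∈ Finset.range N,
          x μ * x ν * Real.cos ((m:ℝ) * (2 * π * (((μ:ℕ):ℝ) - ((ν:ℕ):ℝ)) / (N:ℝ))) := by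
        rw [Finset.sum_comm]
        refine Finset.sum_congr rfl (fun μ _ => ?_)
        rw [Finset.sum_comm]
        push_cast
        rfl
    _ = ∑ μ : Fin r, (N:ℝ) * x μ ^ 2 := by
        refine Finset.sum_congr rfl (fun μ _ => ?_)
        rw [Finset.sum_congr rfl (fun ν _ => key μ ν)]
        simp
    _ = (N:ℝ) * ∑ μ : Fin r, x μ ^ 2 := by rw [Finset.mul_sum]

/-! ### Quadratic forms -/

lemma dot_B (N k r : ℕ) (x : Fin r → ℝ) :
    dotProduct x ((Bmat N k r).mulVec x) =
      ∑ j ∈ Finset.range (k+1), Complex.normSq (Fc N r x ((k:ℤ) - 2*j)) := by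
  have hB : ∀ μ ν : Fin r, Bmat N k r μ ν
      = ∑ j ∈ Finset.range (k+1), Real.cos (((k:ℝ) - 2*j) * (2 * π * (((μ:ℕ):ℝ) - ((ν:ℕ):ℝ)) / (N:ℝ))) := by
    intro μ ν
    rw [Bmat, cheb_sum]
  calc dotProduct x ((Bmat N k r).mulVec x)
      = ∑ μ : Fin r, ∑ ν : Fin r, ∑ j ∈ Finset.range (k+1),
          x μ * x ν * Real.cos (((k:ℝ) - 2*j) * (2 * π * (((μ:ℕ):ℝ) - ((ν:ℕ):ℝ)) / (N:ℝ))) := by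
        rw [dotProduct, Finset.sum_congr rfl (fun μ _ => ?_)]
        rw [Matrix.mulVec, dotProduct, Finset.mul_sum, Finset.sum_congr rfl (fun ν _ => ?_)]
        rw [hB, Finset.sum_mul, Finset.mul_sum, Finset.sum_congr rfl (fun j _ => ?_)]
        ring
    _ = ∑ j ∈ Finset.range (k+1), ∑ μ : Fin r, ∑ ν : Fin r,
          x μ * x ν * Real.cos (((k:ℝ) - 2*j) * (2 * π * (((μ:ℕ):ℝ) - ((ν:ℕ):ℝ)) / (N:ℝ))) := by
        rw [Finset.sum_congr rfl (fun μ (_ : μ ∈ Finset.univ) => Finset.sum_comm), Finset.sum_comm]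
    _ = ∑ j ∈ Finset.range (k+1), Complex.normSq (Fc N r x ((k:ℤ) - 2*j)) := by
        refine Finset.sum_congr rfl (fun j hj => ?_)
        rw [normSq_Fc]
        refine Finset.sum_congr rfl (fun μ _ => Finset.sum_congr rfl (fun ν _ => ?_))
        congr 1
        push_cast
        ring

lemma dot_M (N k r : ℕ) (hN : 0 < N) (hrN : r ≤ N) (x : Fin r → ℝ) :
    dotProduct x ((Mmat N k r).mulVec x) =
      (N:ℝ)⁻¹ * ((∑ m ∈ Finset.range N, Complex.normSq (Fc N r x (m:ℤ)))
        - ∑ j ∈ Finset.range (k+1), Complex.normSq (Fc N r x ((k:ℤ) - 2*j))) := by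
  have hNR : (N:ℝ) ≠ 0 := by exact_mod_cast hN.ne'
  rw [Mmat, Matrix.sub_mulVec, Matrix.smul_mulVec, Matrix.one_mulVec,
    dotProduct_sub, dotProduct_smul, parseval N r hN hrN x, ← dot_B N k r x]
  have hxx : dotProduct x x = ∑ μ : Fin r, x μ ^ 2 := by
    rw [dotProduct]
    exact Finset.sum_congr rfl (fun μ _ => (sq (x μ)).symm)
  rw [hxx, smul_eq_mul]
  field_simp

/-! ### Vandermonde injectivity -/

lemma eq_zero_of_Fc_eq_zero (N r : ℕ) (hN : 0 < N) (x : Fin r → ℝ) (s : Fin r → ℕ)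
    (hinj : Function.Injective s) (hsN : ∀ i, s i < N)
    (h0 : ∀ i, Fc N r x (s i) = 0) : x = 0 := by
  have hNR : (N:ℝ) ≠ 0 := by exact_mod_cast hN.ne'
  set ζ : Fin r → ℂ := fun i => Complex.exp (((2*π*(s i : ℝ)/(N:ℝ)) : ℝ) * Complex.I) with hζ
  have hζinj : Function.Injective ζ := by
    intro i j hij
    rw [hζ] at hij
    simp only at hij
    rw [Complex.exp_eq_exp_iff_exists_int] at hij
    obtain ⟨n, hn⟩ := hij
    have hn2 : (((2*π*(s j : ℝ)/(N:ℝ)) : ℝ) : ℂ) * Complex.I + (n:ℂ) * (2*(π:ℂ)*Complex.I)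
        = (((2*π*(s j : ℝ)/(N:ℝ) + n * (2*π)) : ℝ) : ℂ) * Complex.I := by push_cast; ring
    rw [hn2] at hn
    have hr : (2*π*(s i : ℝ)/(N:ℝ)) = 2*π*(s j : ℝ)/(N:ℝ) + n * (2*π) :=
      Complex.ofReal_inj.mp (mul_right_cancel₀ Complex.I_ne_zero hn)
    have h2π : (2*π:ℝ) ≠ 0 := by positivity
    have hr2 : (2*π) * ((s i : ℝ)) = (2*π) * ((s j : ℝ) + n * N) := by
      field_simp at hr
      ring_nf at hr ⊢
      linear_combination (2 * π) * hr
    have hr3 : ((s i : ℝ)) = ((s j : ℝ) + n * N) := mul_left_cancel₀ h2π hr2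
    have hint : (s i : ℤ) = (s j : ℤ) + n * N := by exact_mod_cast hr3
    have hsi : (s i : ℤ) < N := by exact_mod_cast hsN i
    have hsj : (s j : ℤ) < N := by exact_mod_cast hsN j
    have : s i = s j := by
      rcases (by omega : n = 0 ∨ 1 ≤ n ∨ n ≤ -1) with h | h | h
      · rw [h, zero_mul, add_zero] at hint; exact_mod_cast hint
      · have : (N:ℤ) ≤ n * N := le_mul_of_one_le_left (by positivity) h
        omega
      · have : n * N ≤ -(N:ℤ) := by nlinarith [Int.natCast_pos.mpr hN]
        omega
    exact hinj this
  have hdet : (Matrix.vandermonde ζ).det ≠ 0 := by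
    rw [Ne, Matrix.det_vandermonde_eq_zero_iff]
    rintro ⟨i, j, hij, hne⟩
    exact hne (hζinj hij)
  have hunit : IsUnit (Matrix.vandermonde ζ) := by
    rw [Matrix.isUnit_iff_isUnit_det]
    exact isUnit_iff_ne_zero.mpr hdet
  have hmv : (Matrix.vandermonde ζ).mulVec (fun μ => ((x μ : ℝ) : ℂ)) = 0 := by
    funext i
    have : (Matrix.vandermonde ζ).mulVec (fun μ => ((x μ : ℝ) : ℂ)) i = Fc N r x (s i) := by
      rw [Matrix.mulVec, dotProduct, Fc, Gc]
      refine Finset.sum_congr rfl (fun μ _ => ?_)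
      rw [Matrix.vandermonde]
      simp only [Matrix.of_apply]
      rw [mul_comm]
      congr 1
      rw [hζ]
      simp only
      rw [← Complex.exp_nat_mul]
      congr 1
      push_cast
      ring
    rw [this, h0 i]
    rfl
  have hx0 : (fun μ => ((x μ : ℝ) : ℂ)) = 0 := by
    have hinj2 := Matrix.mulVec_injective_iff_isUnit.mpr hunit
    apply hinj2
    rw [hmv, Matrix.mulVec_zero]
  funext μ
  have := congrFun hx0 μ
  simpa using this

lemma eq_zero_of_Fc_vanish (N r : ℕ) (hN : 0 < N) (x : Fin r → ℝ) (S : Finset ℕ)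
    (hSN : S ⊆ Finset.range N) (hcard : r ≤ S.card)
    (h0 : ∀ m ∈ S, Fc N r x (m:ℤ) = 0) : x = 0 := by
  obtain ⟨T, hTS, hT⟩ := Finset.exists_subset_card_eq hcard
  have e := T.orderIsoOfFin hT
  refine eq_zero_of_Fc_eq_zero N r hN x (fun i => ((e i : ℕ))) ?_ ?_ ?_
  · intro i j hij
    exact e.injective (Subtype.ext hij)
  · intro i
    exact Finset.mem_range.mp (hSN (hTS (e i).2))
  · intro i
    exact h0 _ (hTS (e i).2)

/-! ### Existence of a real kernel vector -/

lemma Gc_sub (N r : ℕ) (z w : Fin r → ℂ) (a : ℤ) :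
    Gc N r (fun μ => z μ - w μ) a = Gc N r z a - Gc N r w a := by
  simp [Gc, sub_mul, Finset.sum_sub_distrib]

lemma exists_real_kernel (N r : ℕ) (hN : 0 < N) (hr : 0 < r) (S : Finset ℕ)
    (hSN : S ⊆ Finset.range N) (hcard : S.card < r)
    (hsym : ∀ m ∈ S, (N - m) % N ∈ S) :
    ∃ x : Fin r → ℝ, x ≠ 0 ∧ ∀ m ∈ S, Fc N r x (m:ℤ) = 0 := by
  classical
  -- the linear map z ↦ (Gc z m)_{m ∈ S}
  let L : (Fin r → ℂ) →ₗ[ℂ] (S → ℂ) :=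
    { toFun := fun z m => Gc N r z (m : ℕ)
      map_add' := by
        intro z w
        funext m
        exact Gc_add N r z w (m : ℕ)
      map_smul' := by
        intro c z
        funext m
        exact Gc_smul N r c z (m : ℕ) }
  have hker : LinearMap.ker L ≠ ⊥ := by
    apply LinearMap.ker_ne_bot_of_finrank_lt
    rw [Module.finrank_pi, Module.finrank_pi]
    simpa using hcard
  obtain ⟨z, hzker, hz0⟩ := Submodule.exists_mem_ne_zero_of_ne_bot hker
  have hzS : ∀ m ∈ S, Gc N r z (m:ℕ) = 0 := by
    intro m hm
    have := LinearMap.mem_ker.mp hzker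
    exact congrFun this ⟨m, hm⟩
  -- conjugate also vanishes
  have hzconjS : ∀ m ∈ S, Gc N r (fun μ => (starRingEnd ℂ) (z μ)) (m:ℕ) = 0 := by
    intro m hm
    have hmN : m < N := Finset.mem_range.mp (hSN hm)
    have hmem : (N - m) % N ∈ S := hsym m hm
    have hGneg : Gc N r z (-(m:ℤ)) = 0 := by
      have hmod : (-(m:ℤ)) % (N:ℤ) = (((N - m) % N : ℕ) : ℤ) % (N:ℤ) := by
        push_cast [Nat.cast_sub hmN.le]
        conv_lhs => rw [show (-(m:ℤ)) = ((N:ℤ) - m) + (N:ℤ)*(-1) by ring]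
        rw [Int.add_mul_emod_self_left, Int.emod_emod_of_dvd _ dvd_rfl]
    
      calc Gc N r z (-(m:ℤ)) = Gc N r z ((-(m:ℤ)) % (N:ℤ)) := (Gc_emod N r hN z _).symm
        _ = Gc N r z ((((N - m) % N : ℕ) : ℤ) % (N:ℤ)) := by rw [hmod]
        _ = Gc N r z (((N - m) % N : ℕ) : ℤ) := Gc_emod N r hN z _
        _ = 0 := hzS _ hmem
    have := conj_Gc N r z (-(m:ℤ))
    rw [neg_neg] at this
    rw [← this, hGneg, map_zero]
  -- real and imaginary parts
  set x1 : Fin r → ℝ := fun μ => (z μ).re with hx1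
  set x2 : Fin r → ℝ := fun μ => (z μ).im with hx2
  have hF1 : ∀ m ∈ S, Fc N r x1 (m:ℤ) = 0 := by
    intro m hm
    have he : (fun μ => ((x1 μ : ℝ) : ℂ)) = fun μ => (2⁻¹ : ℂ) * (z μ + (starRingEnd ℂ) (z μ)) := by
      funext μ
      rw [hx1]
      simp only
      rw [Complex.add_conj]
      push_cast
      ring
    rw [Fc, he]
    rw [show (fun μ => (2⁻¹ : ℂ) * (z μ + (starRingEnd ℂ) (z μ)))
        = (fun μ => (2⁻¹ : ℂ) * ((fun ν => z ν + (starRingEnd ℂ) (z ν)) μ)) from rfl]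
    rw [Gc_smul, Gc_add, hzS m hm, hzconjS m hm]
    simp
  have hF2 : ∀ m ∈ S, Fc N r x2 (m:ℤ) = 0 := by
    intro m hm
    have he : (fun μ => ((x2 μ : ℝ) : ℂ))
        = fun μ => ((2*Complex.I)⁻¹ : ℂ) * (z μ - (starRingEnd ℂ) (z μ)) := by
      funext μ
      rw [hx2]
      simp only
      rw [Complex.sub_conj]
      have : (2*Complex.I : ℂ) ≠ 0 := by simp [Complex.I_ne_zero]
      field_simp
      push_cast
      ring
    rw [Fc, he]
    rw [show (fun μ => ((2*Complex.I)⁻¹ : ℂ) * (z μ - (starRingEnd ℂ) (z μ)))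
        = (fun μ => ((2*Complex.I)⁻¹ : ℂ) * ((fun ν => z ν - (starRingEnd ℂ) (z ν)) μ)) from rfl]
    rw [Gc_smul, Gc_sub, hzS m hm, hzconjS m hm]
    simp
  by_cases h1 : x1 = 0
  · refine ⟨x2, ?_, hF2⟩
    intro h2
    apply hz0
    funext μ
    have e1 := congrFun h1 μ
    have e2 := congrFun h2 μ
    simp only [hx1, hx2, Pi.zero_apply] at e1 e2
    exact Complex.ext e1 e2
  · exact ⟨x1, h1, hF1⟩

/-! ### Residue set facts -/

lemma Dset_subset (N k : ℕ) (hN : 0 < N) : Dset N k ⊆ Finset.range N := by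
  intro m hm
  simp only [Dset, Finset.mem_image, Finset.mem_range] at hm ⊢
  obtain ⟨j, _, rfl⟩ := hm
  have h1 : (0:ℤ) ≤ ((k:ℤ) - 2*j) % (N:ℤ) := Int.emod_nonneg _ (by exact_mod_cast hN.ne')
  have h2 : ((k:ℤ) - 2*j) % (N:ℤ) < (N:ℤ) := Int.emod_lt_of_pos _ (by exact_mod_cast hN)
  omega

lemma Dset_sym (N k : ℕ) (hN : 0 < N) : ∀ m ∈ Dset N k, (N - m) % N ∈ Dset N k := by
  intro m hm
  simp only [Dset, Finset.mem_image, Finset.mem_range] at hm ⊢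
  obtain ⟨j, hj, rfl⟩ := hm
  have hNz : (N:ℤ) ≠ 0 := by exact_mod_cast hN.ne'
  set b : ℤ := ((k:ℤ) - 2*(j:ℤ)) % (N:ℤ) with hb
  have hb0 : 0 ≤ b := Int.emod_nonneg _ hNz
  have hbN : b < (N:ℤ) := Int.emod_lt_of_pos _ (by exact_mod_cast hN)
  refine ⟨k - j, by omega, ?_⟩
  have hjk : j ≤ k := by omega
  have hval : (k:ℤ) - 2*((k - j : ℕ) : ℤ) = -((k:ℤ) - 2*(j:ℤ)) + (k:ℤ)*0 := by
    push_cast [Nat.cast_sub hjk]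
    ring
  rw [hval]
  rw [mul_zero, add_zero]
  -- goal : ((-(k - 2j)) % N).toNat = (N - b.toNat) % N
  have hmod : (-((k:ℤ) - 2*(j:ℤ))) % (N:ℤ) = (-b) % (N:ℤ) := by
    conv_lhs => rw [show -((k:ℤ) - 2*(j:ℤ)) = -b + (-(((k:ℤ) - 2*(j:ℤ)) / (N:ℤ)))*(N:ℤ) from by
      rw [hb]; rw [Int.emod_def]; ring]
    rw [Int.add_mul_emod_self_right]
  rw [hmod]
  -- now pure arithmetic with b
  rcases eq_or_lt_of_le hb0 with hb00 | hbpos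
  · rw [← hb00]
    simp
  · have hnegb : (-b) % (N:ℤ) = (N:ℤ) - b := by
      rw [show -b = ((N:ℤ) - b) + (N:ℤ)*(-1) from by ring, Int.add_mul_emod_self_left]
      exact Int.emod_eq_of_lt (by omega) (by omega)
    rw [hnegb]
    have : (N - b.toNat) % N = N - b.toNat := Nat.mod_eq_of_lt (by omega)
    omega

lemma residue_injOn (N k : ℕ) (hkN : k < N) (hcond : ¬ (N % 2 = 0 ∧ N ≤ 2 * k)) :
    Set.InjOn (fun j : ℕ => ((((k:ℤ) - 2*(j:ℤ)) % (N:ℤ)).toNat)) ((Finset.range (k+1) : Finset ℕ) : Set ℕ) := by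
  intro j hj j' hj' h
  simp only [Finset.coe_range, Set.mem_Iio] at hj hj'
  have hN : 0 < N := by omega
  have hNz : (N:ℤ) ≠ 0 := by exact_mod_cast hN.ne'
  have h' : ((((k:ℤ) - 2*(j:ℤ)) % (N:ℤ)).toNat) = ((((k:ℤ) - 2*(j':ℤ)) % (N:ℤ)).toNat) := h
  have h1 : ((k:ℤ) - 2*(j:ℤ)) % (N:ℤ) = ((k:ℤ) - 2*(j':ℤ)) % (N:ℤ) := by
    have e1 : (0:ℤ) ≤ ((k:ℤ) - 2*(j:ℤ)) % (N:ℤ) := Int.emod_nonneg _ hNz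
    have e2 : (0:ℤ) ≤ ((k:ℤ) - 2*(j':ℤ)) % (N:ℤ) := Int.emod_nonneg _ hNz
    omega
  have h2 : ((N:ℤ)) ∣ (((k:ℤ) - 2*(j:ℤ)) - ((k:ℤ) - 2*(j':ℤ))) := by
    exact Int.dvd_of_emod_eq_zero (Int.emod_eq_emod_iff_emod_sub_eq_zero.mp h1)
  obtain ⟨c, hc⟩ := h2
  have hcrange : -2 < c ∧ c < 2 := by
    constructor
    · by_contra hcon
      push_neg at hcon
      have : (N:ℤ)*c ≤ (N:ℤ)*(-2) := by
        apply mul_le_mul_of_nonneg_left (by omega) (by positivity)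
      omega
    · by_contra hcon
      push_neg at hcon
      have : (N:ℤ)*2 ≤ (N:ℤ)*c := by
        apply mul_le_mul_of_nonneg_left (by omega) (by positivity)
      omega
  obtain ⟨hcl, hcr⟩ := hcrange
  interval_cases c
  · exfalso
    rw [show ((-1:ℤ)) = -1 from rfl] at hc
    apply hcond
    constructor <;> omega
  · omega
  · exfalso
    apply hcond
    constructor <;> omega

lemma parity_subset (N k : ℕ) (hN2 : N % 2 = 0) (hk2 : N ≤ 2*k) (hkN : k < N) :
    ∀ m, m < N → m % 2 = k % 2 → m ∈ Dset N k := by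
  intro m hmN hpar
  simp only [Dset, Finset.mem_image, Finset.mem_range]
  by_cases hmk : m ≤ k
  · refine ⟨(k - m)/2, by omega, ?_⟩
    have h2 : (k:ℤ) - 2*(((k-m)/2 : ℕ) : ℤ) = (m:ℤ) := by
      have : (k - m) / 2 * 2 = k - m := by omega
      push_cast [this]
      omega
    rw [h2, Int.emod_eq_of_lt (by positivity) (by exact_mod_cast hmN)]
    simp
  · push_neg at hmk
    refine ⟨(k + N - m)/2, by omega, ?_⟩
    have h2 : (k:ℤ) - 2*(((k+N-m)/2 : ℕ) : ℤ) = (m:ℤ) - (N:ℤ) := by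
      have h3 : (k + N - m) / 2 * 2 = k + N - m := by omega
      have h4 : m ≤ k + N := by omega
      push_cast [h3]
      omega
    rw [h2]
    rw [show (m:ℤ) - (N:ℤ) = (m:ℤ) + (N:ℤ)*(-1) from by ring, Int.add_mul_emod_self_left,
      Int.emod_eq_of_lt (by positivity) (by exact_mod_cast hmN)]
    simp

/-! ### sum over image inequality -/

lemma sum_image_le (g : ℕ → ℕ) (s : Finset ℕ) (f : ℕ → ℝ) (hf : ∀ m, 0 ≤ f m) :
    ∑ m ∈ s.image g, f m ≤ ∑ j ∈ s, f (g j) := by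
  classical
  induction s using Finset.induction_on with
  | empty => simp
  | @insert a s ha ih =>
    rw [Finset.image_insert, Finset.sum_insert ha]
    by_cases hga : g a ∈ s.image g
    · rw [Finset.insert_eq_self.mpr hga]
      have := hf (g a)
      linarith
    · rw [Finset.sum_insert hga]
      linarith

/-! ### The reflection identity -/

lemma Bmat_add (N k r : ℕ) (hN : 0 < N) (hk2 : k + 2 ≤ N) (h2r : 2 * r ≤ N) :
    Bmat N k r + Bmat N (N - 2 - k) r = (N : ℝ) • (1 : Matrix (Fin r) (Fin r) ℝ) := by
  have hNR : (N:ℝ) ≠ 0 := by exact_mod_cast hN.ne'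
  ext μ ν
  simp only [Matrix.add_apply, Matrix.smul_apply, Matrix.one_apply, smul_eq_mul, Bmat]
  by_cases hμν : μ = ν
  · subst hμν
    rw [if_pos rfl, mul_one]
    have h0 : (2 * π * ((μ : ℝ) - (μ : ℝ)) / N) = 0 := by ring
    rw [h0, Real.cos_zero]
    have e1 : chebU k 1 = ((k:ℝ)+1) := by
      have := cheb_sum k 0
      simp only [Real.cos_zero, mul_zero] at this
      rw [this, Finset.sum_const, Finset.card_range, nsmul_eq_mul, mul_one]
      push_cast; ring
    have e2 : chebU (N-2-k) 1 = (((N-2-k:ℕ)):ℝ)+1 := by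
      have := cheb_sum (N-2-k) 0
      simp only [Real.cos_zero, mul_zero] at this
      rw [this, Finset.sum_const, Finset.card_range, nsmul_eq_mul, mul_one]
      push_cast; ring
    rw [e1, e2]
    have hcast : ((N - 2 - k : ℕ) : ℝ) = (N:ℝ) - 2 - (k:ℝ) := by
      have h' : N - 2 - k = N - (2+k) := by omega
      rw [h', Nat.cast_sub (by omega : 2 + k ≤ N)]
      push_cast; ring
    rw [hcast]
    ring
  · rw [if_neg hμν, mul_zero]
    set t : ℝ := 2 * π * ((μ:ℝ) - (ν:ℝ)) / N with ht
    set d : ℤ := ((μ:ℕ):ℤ) - ((ν:ℕ):ℤ) with hd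
    have hμr : (μ:ℕ) < r := μ.2
    have hνr : (ν:ℕ) < r := ν.2
    have hdne : d ≠ 0 := by
      rw [hd]
      intro hc
      exact hμν (Fin.ext (by omega))
    have hdvd : ¬ ((N:ℤ) ∣ 2*d) := by
      intro ⟨c, hc⟩
      have hb1 : -(N:ℤ) < 2*d := by omega
      have hb2 : 2*d < (N:ℤ) := by omega
      rcases (by omega : c = 0 ∨ 1 ≤ c ∨ c ≤ -1) with h | h | h
      · rw [h, mul_zero] at hc; omega
      · have : (N:ℤ) ≤ N*c := le_mul_of_one_le_right (by positivity) h
        omega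
      · have : (N:ℤ)*c ≤ N*(-1) := mul_le_mul_of_nonneg_left (by omega) (by positivity)
        omega
    have hdR : ((μ:ℝ) - (ν:ℝ)) = (d:ℝ) := by rw [hd]; push_cast; ring
    rw [cheb_sum k t, cheb_sum (N-2-k) t]
    set k' : ℕ := N - 2 - k with hk'
    have hkk' : (k+1) + (k'+1) = N := by omega
    set g : ℕ → ℝ := fun i => Real.cos ((-(k:ℝ) + 2*(i:ℝ)) * t) with hg
    have hfirst : ∑ j ∈ Finset.range (k+1), Real.cos (((k:ℝ) - 2*(j:ℝ)) * t)
        = ∑ i ∈ Finset.range (k+1), g i := by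
      rw [← Finset.sum_range_reflect g (k+1)]
      refine Finset.sum_congr rfl (fun j hj => ?_)
      rw [hg]
      simp only
      congr 1
      rw [Finset.mem_range] at hj
      rw [Nat.cast_sub (by omega : j ≤ k + 1 - 1)]
      push_cast
      ring
    have hsec : ∑ j ∈ Finset.range (k'+1), Real.cos (((k':ℝ) - 2*(j:ℝ)) * t)
        = ∑ j ∈ Finset.range (k'+1), g (k+1+j) := by
      refine Finset.sum_congr rfl (fun j hj => ?_)
      have hNt : (N:ℝ) * t = (d:ℝ) * (2*π) := by
        rw [ht, hdR]
        field_simp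
      have hcast' : ((k':ℕ) : ℝ) = (N:ℝ) - 2 - (k:ℝ) := by
        have h' : k' = N - (2+k) := by omega
        rw [h', Nat.cast_sub (by omega : 2 + k ≤ N)]
        push_cast; ring
      have harg : ((k':ℝ) - 2*(j:ℝ)) * t = (d:ℝ) * (2*π) - ((-(k:ℝ) + 2*((k+1+j:ℕ):ℝ)) * t) := by
        rw [hcast', ← hNt]
        push_cast
        ring
      rw [harg, Real.cos_int_mul_two_pi_sub]
    rw [hfirst, hsec, ← Finset.sum_range_add g (k+1) (k'+1), hkk']
    have := geom_cos N hN (-(k:ℤ)) 2 d (by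
      intro hdd
      exact hdvd hdd)
    rw [← this]
    refine Finset.sum_congr rfl (fun i hi => ?_)
    rw [hg, ht, hdR]
    simp only
    congr 1
    push_cast
    ring

lemma Mmat_eq_flip (N k r : ℕ) (hN : 0 < N) (hk2 : k + 2 ≤ N) (h2r : 2 * r ≤ N) :
    Mmat N k r = (N:ℝ)⁻¹ • Bmat N (N - 2 - k) r := by
  have hB := Bmat_add N k r hN hk2 h2r
  have hNne : (N:ℝ) ≠ 0 := by exact_mod_cast hN.ne'
  have : Bmat N (N-2-k) r = (N:ℝ) • (1 : Matrix (Fin r) (Fin r) ℝ) - Bmat N k r := by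
    rw [← hB]; abel
  rw [Mmat, this, smul_sub, smul_smul, inv_mul_cancel₀ hNne, one_smul]

/-! ### Hermitian -/

lemma Mmat_herm (N k r : ℕ) : (Mmat N k r).IsHermitian := by
  unfold Matrix.IsHermitian
  ext μ ν
  simp only [Mmat, Matrix.conjTranspose_apply, Matrix.sub_apply, Matrix.smul_apply,
    Matrix.one_apply, Bmat, star_trivial, smul_eq_mul]
  have : (2 * π * ((ν : ℝ) - (μ : ℝ)) / N) = -(2 * π * ((μ : ℝ) - (ν : ℝ)) / N) := by ring
  rw [this, Real.cos_neg]
  by_cases h : μ = ν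
  · subst h; simp
  · rw [if_neg h, if_neg (fun hc => h hc.symm)]

/-! ### Main theorem -/

theorem Mmat_posDef_iff (N k r : ℕ) (hN : 1 ≤ N) (hk : k ≤ N - 1) (hr : r ≤ N - 1) :
    (Mmat N k r).PosDef ↔ k + r < N := by
  have hN0 : 0 < N := hN
  have hkN : k < N := by omega
  have hrN : r < N := by omega
  have hNR : (N:ℝ) ≠ 0 := by exact_mod_cast hN0.ne'
  rcases Nat.eq_zero_or_pos r with hr0 | hrpos
  · subst hr0
    constructor
    · intro _; omega
    · intro _
      refine ⟨Mmat_herm N k 0, fun x hx => absurd ?_ hx⟩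
      ext i
      exact absurd i.2 (by omega)
  constructor
  · -- PosDef → k + r < N  (by contradiction)
    intro hPD
    by_contra hge
    push_neg at hge
    by_cases h2r : 2 * r ≤ N
    · by_cases hkN1 : k + 2 ≤ N
      · -- identity route : M = N⁻¹ B_{k'}, which is singular
        have hM := Mmat_eq_flip N k r hN0 hkN1 h2r
        set k' := N - 2 - k with hk'
        have hcard : (Dset N k').card < r := by
          calc (Dset N k').card ≤ (Finset.range (k'+1)).card := Finset.card_image_le
            _ = k' + 1 := Finset.card_range _
            _ < r := by omega
        obtain ⟨x, hx0, hxF⟩ := exists_real_kernel N r hN0 hrpos (Dset N k')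
          (Dset_subset N k' hN0) hcard (Dset_sym N k' hN0)
        have hq := hPD.dotProduct_mulVec_pos hx0
        have hstar : star x = x := by funext i; simp
        rw [hstar] at hq
        have hzero : dotProduct x ((Mmat N k r).mulVec x) = 0 := by
          rw [hM, Matrix.smul_mulVec, dotProduct_smul, smul_eq_mul,
            dot_B N k' r x]
          have hterm : ∀ j ∈ Finset.range (k'+1),
              Complex.normSq (Fc N r x ((k':ℤ) - 2*(j:ℤ))) = 0 := by
            intro j hj
            have hm : ((((k':ℤ) - 2*(j:ℤ)) % (N:ℤ)).toNat) ∈ Dset N k' :=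
              Finset.mem_image_of_mem _ hj
            have h1 := hxF _ hm
            rw [Fc_res N r hN0 x ((k':ℤ) - 2*(j:ℤ))] at h1
            rw [h1, Complex.normSq_zero]
          rw [Finset.sum_eq_zero hterm, mul_zero]
        rw [hzero] at hq
        exact lt_irrefl 0 hq
      · -- k = N - 1 : M kills e₀
        set x : Fin r → ℝ := Pi.single ⟨0, hrpos⟩ 1 with hx
        have hx0 : x ≠ 0 := by
          intro hc
          have := congrFun hc ⟨0, hrpos⟩
          rw [hx] at this
          simp [Pi.single_eq_same] at this
        have hq := hPD.dotProduct_mulVec_pos hx0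
        have hstar : star x = x := by funext i; simp
        rw [hstar] at hq
        have hFc : ∀ a : ℤ, Fc N r x a = 1 := by
          intro a
          rw [Fc, Gc]
          rw [Finset.sum_eq_single (⟨0, hrpos⟩ : Fin r)]
          · rw [hx]
            simp
          · intro b _ hb
            rw [hx]
            simp [Pi.single_eq_of_ne hb]
          · intro hmem
            exact absurd (Finset.mem_univ _) hmem
        have hs1 : ∑ m ∈ Finset.range N, Complex.normSq (Fc N r x (m:ℤ)) = (N:ℝ) := by
          rw [Finset.sum_congr rfl (fun m _ => by rw [hFc (m:ℤ), Complex.normSq_one]),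
            Finset.sum_const, Finset.card_range, nsmul_eq_mul, mul_one]
        have hs2 : ∑ j ∈ Finset.range (k+1), Complex.normSq (Fc N r x ((k:ℤ) - 2*(j:ℤ)))
            = (k:ℝ) + 1 := by
          rw [Finset.sum_congr rfl (fun j _ => by rw [hFc ((k:ℤ) - 2*(j:ℤ)), Complex.normSq_one]),
            Finset.sum_const, Finset.card_range, nsmul_eq_mul, mul_one]
          push_cast
          ring
        rw [dot_M N k r hN0 hrN.le x, hs1, hs2] at hq
        have hkN2 : ((k:ℝ) + 1) = (N:ℝ) := by
          have : k + 1 = N := by omega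
          exact_mod_cast this
        rw [hkN2, sub_self, mul_zero] at hq
        exact lt_irrefl 0 hq
    · -- N < 2r : find a real kernel vector for the complement G
      push_neg at h2r
      set G := Finset.range N \ Dset N k with hG
      have hGsub : G ⊆ Finset.range N := Finset.sdiff_subset
      have hGsym : ∀ m ∈ G, (N - m) % N ∈ G := by
        intro m hm
        rw [hG, Finset.mem_sdiff] at hm ⊢
        obtain ⟨hm1, hm2⟩ := hm
        have hmN : m < N := Finset.mem_range.mp hm1
        refine ⟨Finset.mem_range.mpr (Nat.mod_lt _ hN0), ?_⟩
        intro hc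
        have hsm := Dset_sym N k hN0 _ hc
        have heq : (N - (N - m) % N) % N = m := by
          rcases Nat.eq_zero_or_pos m with h0 | hpos
          · subst h0; simp
          · have h1 : (N - m) % N = N - m := Nat.mod_eq_of_lt (by omega)
            rw [h1, show N - (N - m) = m from by omega, Nat.mod_eq_of_lt hmN]
        rw [heq] at hsm
        exact hm2 hsm
      have hGcard : G.card < r := by
        by_cases hcol : N % 2 = 0 ∧ N ≤ 2 * k
        · have hsub : G ⊆ (Finset.range N).filter (fun m => m % 2 = 1 - k % 2) := by
            intro m hm
            rw [hG, Finset.mem_sdiff] at hm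
            rw [Finset.mem_filter]
            refine ⟨hm.1, ?_⟩
            have hmN := Finset.mem_range.mp hm.1
            by_contra hpar
            have hpar2 : m % 2 = k % 2 := by omega
            exact hm.2 (parity_subset N k hcol.1 hcol.2 hkN m hmN hpar2)
          have hle := Finset.card_le_card hsub
          have hhalf : ((Finset.range N).filter (fun m => m % 2 = 1 - k % 2)).card ≤ N / 2 := by
            have himg : (((Finset.range N).filter (fun m => m % 2 = 1 - k % 2)).image
                (fun m => m / 2)) ⊆ Finset.range (N / 2) := by
              intro a ha
              rw [Finset.mem_image] at ha
              obtain ⟨m, hm, rfl⟩ := ha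
              rw [Finset.mem_filter, Finset.mem_range] at hm
              rw [Finset.mem_range]
              omega
            have hcardeq : (((Finset.range N).filter (fun m => m % 2 = 1 - k % 2)).image
                (fun m => m / 2)).card
                = ((Finset.range N).filter (fun m => m % 2 = 1 - k % 2)).card := by
              apply Finset.card_image_of_injOn
              intro a ha b hb hab
              have ha' : a % 2 = 1 - k % 2 := (Finset.mem_filter.mp (Finset.mem_coe.mp ha)).2
              have hb' : b % 2 = 1 - k % 2 := (Finset.mem_filter.mp (Finset.mem_coe.mp hb)).2
              simp only at hab
              omega
            calc ((Finset.range N).filter (fun m => m % 2 = 1 - k % 2)).card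
                = (((Finset.range N).filter (fun m => m % 2 = 1 - k % 2)).image
                    (fun m => m / 2)).card := hcardeq.symm
              _ ≤ (Finset.range (N / 2)).card := Finset.card_le_card himg
              _ = N / 2 := Finset.card_range _
          omega
        · have hinj := residue_injOn N k hkN hcol
          have hDcard : (Dset N k).card = k + 1 := by
            rw [Dset, Finset.card_image_of_injOn hinj, Finset.card_range]
          have hGc : G.card = N - (k+1) := by
            rw [hG, Finset.card_sdiff_of_subset (Dset_subset N k hN0), Finset.card_range, hDcard]
          omega
      obtain ⟨x, hx0, hxF⟩ := exists_real_kernel N r hN0 hrpos G hGsub hGcard hGsym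
      have hq := hPD.dotProduct_mulVec_pos hx0
      have hstar : star x = x := by funext i; simp
      rw [hstar] at hq
      have hle : dotProduct x ((Mmat N k r).mulVec x) ≤ 0 := by
        rw [dot_M N k r hN0 hrN.le x]
        have h1 : ∑ m ∈ Dset N k, Complex.normSq (Fc N r x (m:ℤ))
            ≤ ∑ j ∈ Finset.range (k+1), Complex.normSq (Fc N r x ((k:ℤ) - 2*(j:ℤ))) := by
          have hl := sum_image_le (fun j : ℕ => ((((k:ℤ) - 2*(j:ℤ)) % (N:ℤ)).toNat))
            (Finset.range (k+1)) (fun m => Complex.normSq (Fc N r x (m:ℤ)))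
            (fun m => Complex.normSq_nonneg _)
          rw [show ((Finset.range (k+1)).image
              (fun j : ℕ => ((((k:ℤ) - 2*(j:ℤ)) % (N:ℤ)).toNat))) = Dset N k from rfl] at hl
          refine le_trans hl (le_of_eq ?_)
          refine Finset.sum_congr rfl (fun j hj => ?_)
          rw [Fc_res N r hN0 x ((k:ℤ) - 2*(j:ℤ))]
        have h2 : ∑ m ∈ Finset.range N, Complex.normSq (Fc N r x (m:ℤ))
            = ∑ m ∈ G, Complex.normSq (Fc N r x (m:ℤ))
              + ∑ m ∈ Dset N k, Complex.normSq (Fc N r x (m:ℤ)) :=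
          (Finset.sum_sdiff (Dset_subset N k hN0)).symm
        have h3 : ∑ m ∈ G, Complex.normSq (Fc N r x (m:ℤ)) = 0 := by
          refine Finset.sum_eq_zero (fun m hm => ?_)
          rw [hxF m hm, Complex.normSq_zero]
        rw [h2, h3, zero_add]
        have hfac : (0:ℝ) ≤ (N:ℝ)⁻¹ := by positivity
        have : (∑ m ∈ Dset N k, Complex.normSq (Fc N r x (m:ℤ)))
            - ∑ j ∈ Finset.range (k+1), Complex.normSq (Fc N r x ((k:ℤ) - 2*(j:ℤ))) ≤ 0 := by
          linarith
        exact mul_nonpos_of_nonneg_of_nonpos hfac this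
      linarith
  · -- k + r < N → PosDef
    intro hlt
    refine Matrix.posDef_iff_dotProduct_mulVec.mpr ⟨Mmat_herm N k r, ?_⟩
    intro x hx0
    have hstar : star x = x := by funext i; simp
    rw [hstar]
    by_cases hcol : N % 2 = 0 ∧ N ≤ 2 * k
    · -- collision case : use the reflection identity, B_{k'} is PD
      have hk2 : k + 2 ≤ N := by omega
      have h2r : 2 * r ≤ N := by omega
      have hM := Mmat_eq_flip N k r hN0 hk2 h2r
      set k' := N - 2 - k with hk'
      rw [hM, Matrix.smul_mulVec, dotProduct_smul, smul_eq_mul, dot_B N k' r x]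
      have hnn : 0 ≤ ∑ j ∈ Finset.range (k'+1), Complex.normSq (Fc N r x ((k':ℤ) - 2*(j:ℤ))) :=
        Finset.sum_nonneg (fun j _ => Complex.normSq_nonneg _)
      rcases hnn.lt_or_eq with hpos | heq
      · exact mul_pos (by positivity) hpos
      · exfalso
        have hzero : ∀ j ∈ Finset.range (k'+1), Fc N r x ((k':ℤ) - 2*(j:ℤ)) = 0 := by
          intro j hj
          have := (Finset.sum_eq_zero_iff_of_nonneg
            (fun (j : ℕ) (_ : j ∈ Finset.range (k'+1)) =>
              Complex.normSq_nonneg (Fc N r x ((k':ℤ) - 2*(j:ℤ))))).mp heq.symm j hj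
          exact Complex.normSq_eq_zero.mp this
        have hinj := residue_injOn N k' (by omega) (by
          rintro ⟨-, hcon⟩
          omega)
        have hDcard : (Dset N k').card = k' + 1 := by
          rw [Dset, Finset.card_image_of_injOn hinj, Finset.card_range]
        apply hx0
        refine eq_zero_of_Fc_vanish N r hN0 x (Dset N k') (Dset_subset N k' hN0)
          (by omega) (fun m hm => ?_)
        rw [Dset, Finset.mem_image] at hm
        obtain ⟨j, hj, rfl⟩ := hm
        rw [Fc_res N r hN0 x ((k':ℤ) - 2*(j:ℤ))]
        exact hzero j hj
    · -- no collision : quadratic form is the sum over the complement G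
      rw [dot_M N k r hN0 hrN.le x]
      have hinj := residue_injOn N k hkN hcol
      have hDsum : ∑ j ∈ Finset.range (k+1), Complex.normSq (Fc N r x ((k:ℤ) - 2*(j:ℤ)))
          = ∑ m ∈ Dset N k, Complex.normSq (Fc N r x (m:ℤ)) := by
        rw [Dset, Finset.sum_image (fun a ha b hb h => hinj (by simpa using ha)
          (by simpa using hb) h)]
        refine Finset.sum_congr rfl (fun j hj => ?_)
        rw [Fc_res N r hN0 x ((k:ℤ) - 2*(j:ℤ))]
      have h2 : ∑ m ∈ Finset.range N, Complex.normSq (Fc N r x (m:ℤ))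
          = ∑ m ∈ Finset.range N \ Dset N k, Complex.normSq (Fc N r x (m:ℤ))
            + ∑ m ∈ Dset N k, Complex.normSq (Fc N r x (m:ℤ)) :=
        (Finset.sum_sdiff (Dset_subset N k hN0)).symm
      rw [hDsum, h2, add_sub_cancel_right]
      set G := Finset.range N \ Dset N k with hG
      have hnn : 0 ≤ ∑ m ∈ G, Complex.normSq (Fc N r x (m:ℤ)) :=
        Finset.sum_nonneg (fun m _ => Complex.normSq_nonneg _)
      rcases hnn.lt_or_eq with hpos | heq
      · exact mul_pos (by positivity) hpos
      · exfalso
        have hDcard : (Dset N k).card = k + 1 := by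
          rw [Dset, Finset.card_image_of_injOn hinj, Finset.card_range]
        have hGcard : r ≤ G.card := by
          rw [hG, Finset.card_sdiff_of_subset (Dset_subset N k hN0), Finset.card_range, hDcard]
          omega
        apply hx0
        refine eq_zero_of_Fc_vanish N r hN0 x G Finset.sdiff_subset hGcard (fun m hm => ?_)
        have := (Finset.sum_eq_zero_iff_of_nonneg
          (fun (m : ℕ) (_ : m ∈ G) => Complex.normSq_nonneg (Fc N r x (m:ℤ)))).mp heq.symm m hm
        exact Complex.normSq_eq_zero.mp this
end

section
/- For each k ≥ 0 and each t ∈ (−1,1), θ ∈ [0,2π], if P is an orthogonal polynomial of degree k on the unit disk B (with respect to Lebesgue measure), then R P(θ, t) = (2/(k+1)) √(1−t²) U_k(t) P(cos θ, sin θ). -/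
open Real

/-- Radon transform of `f` over the chord of the unit disk
`{(x,y) : x cos θ + y sin θ = t}`, parametrized by arclength. -/
noncomputable def radon (f : ℝ × ℝ → ℝ) (θ t : ℝ) : ℝ :=
  ∫ s in Set.Ioo (-Real.sqrt (1 - t ^ 2)) (Real.sqrt (1 - t ^ 2)),
    f (t * Real.cos θ - s * Real.sin θ, t * Real.sin θ + s * Real.cos θ)

/-- Evaluation of a bivariate polynomial at a point of the plane. -/
noncomputable def evalPoly (P : MvPolynomial (Fin 2) ℝ) (p : ℝ × ℝ) : ℝ :=
  MvPolynomial.eval ![p.1, p.2] P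

namespace MarrAux
open MeasureTheory intervalIntegral Polynomial


lemma U_coeff_natDegree : ∀ n : ℕ, (Polynomial.Chebyshev.U ℝ (n:ℤ)).natDegree ≤ n ∧
    (Polynomial.Chebyshev.U ℝ (n:ℤ)).coeff n = 2^n := by
  intro n
  induction n using Nat.strong_induction_on with
  | _ n ih =>
    match n with
    | 0 => simp
    | 1 =>
      constructor
      · simpa using Polynomial.natDegree_mul_le (p := (2:ℝ[X])) (q := X)
      · rw [show Polynomial.Chebyshev.U ℝ ((1:ℕ):ℤ) = 2 * X by exact Polynomial.Chebyshev.U_one ℝ,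
          show (2 * X : ℝ[X]) = Polynomial.C 2 * X by rw [map_ofNat Polynomial.C 2], Polynomial.coeff_C_mul,
          Polynomial.coeff_X_one]
        norm_num
    | (m+2) =>
      obtain ⟨h1d, h1c⟩ := ih (m+1) (by omega)
      obtain ⟨h2d, h2c⟩ := ih m (by omega)
      have hrec : Polynomial.Chebyshev.U ℝ ((m+2 : ℕ) : ℤ)
          = 2 * X * Polynomial.Chebyshev.U ℝ ((m+1 : ℕ) : ℤ) - Polynomial.Chebyshev.U ℝ (m : ℤ) := by
        have := Polynomial.Chebyshev.U_add_two ℝ (m : ℤ)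
        rw [show ((m+2 : ℕ) : ℤ) = (m : ℤ) + 2 by push_cast; ring,
          show ((m+1 : ℕ) : ℤ) = (m : ℤ) + 1 by push_cast; ring]
        exact this
      have h2X : (2 * X * Polynomial.Chebyshev.U ℝ ((m+1 : ℕ) : ℤ)) =
          Polynomial.C 2 * (X * Polynomial.Chebyshev.U ℝ ((m+1 : ℕ) : ℤ)) := by
        rw [← mul_assoc, map_ofNat Polynomial.C 2]
      constructor
      · rw [hrec]
        refine le_trans (Polynomial.natDegree_sub_le _ _) ?_
        refine max_le ?_ (by omega)
        refine le_trans (Polynomial.natDegree_mul_le) ?_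
        have : (2 * X : ℝ[X]).natDegree ≤ 1 := by
          simpa using Polynomial.natDegree_mul_le (p := (2:ℝ[X])) (q := X)
        omega
      · rw [hrec, Polynomial.coeff_sub, h2X, Polynomial.coeff_C_mul,
          show m + 2 = (m+1) + 1 by ring, Polynomial.coeff_X_mul, h1c,
          Polynomial.coeff_eq_zero_of_natDegree_lt (by omega)]
        ring

lemma U_eval_one : ∀ n : ℕ, (Polynomial.Chebyshev.U ℝ (n:ℤ)).eval 1 = n + 1 := by
  intro n
  induction n using Nat.strong_induction_on with
  | _ n ih =>
    match n with
    | 0 => simp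
    | 1 => norm_num [Polynomial.Chebyshev.U_one]
    | (m+2) =>
      have h1 := ih (m+1) (by omega)
      have h2 := ih m (by omega)
      have hrec : Polynomial.Chebyshev.U ℝ ((m+2 : ℕ) : ℤ)
          = 2 * X * Polynomial.Chebyshev.U ℝ ((m+1 : ℕ) : ℤ) - Polynomial.Chebyshev.U ℝ (m : ℤ) := by
        have := Polynomial.Chebyshev.U_add_two ℝ (m : ℤ)
        rw [show ((m+2 : ℕ) : ℤ) = (m : ℤ) + 2 by push_cast; ring,
          show ((m+1 : ℕ) : ℤ) = (m : ℤ) + 1 by push_cast; ring]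
        exact this
      rw [hrec]
      simp only [Polynomial.eval_sub, Polynomial.eval_mul, Polynomial.eval_ofNat,
        Polynomial.eval_X, h1, h2]
      push_cast; ring

lemma exists_U_expansion (k : ℕ) : ∀ q : ℝ[X], q.natDegree ≤ k →
    ∃ c : Fin (k+1) → ℝ, q = ∑ i : Fin (k+1), c i • Polynomial.Chebyshev.U ℝ ((i : ℕ) : ℤ) := by
  induction k with
  | zero =>
    intro q hq
    refine ⟨fun _ => q.coeff 0, ?_⟩
    rw [Polynomial.eq_C_of_natDegree_le_zero hq]
    simp [Polynomial.smul_eq_C_mul]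
  | succ k ihk =>
    intro q hq
    set a : ℝ := q.coeff (k+1) / 2^(k+1) with ha
    set q' : ℝ[X] := q - a • Polynomial.Chebyshev.U ℝ ((k+1 : ℕ) : ℤ) with hq'
    have hUd := (U_coeff_natDegree (k+1)).1
    have hUc := (U_coeff_natDegree (k+1)).2
    have hq'c : q'.coeff (k+1) = 0 := by
      rw [hq', Polynomial.coeff_sub, Polynomial.coeff_smul, hUc, ha]
      rw [smul_eq_mul, div_mul_cancel₀ _ (by positivity), sub_self]
    have hq'd : q'.natDegree ≤ k := by
      rw [Polynomial.natDegree_le_iff_coeff_eq_zero]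
      intro N hN
      rcases eq_or_lt_of_le (Nat.succ_le_of_lt hN) with h | h
      · subst h; exact hq'c
      · rw [hq', Polynomial.coeff_sub, Polynomial.coeff_smul,
          Polynomial.coeff_eq_zero_of_natDegree_lt (lt_of_le_of_lt hq h),
          Polynomial.coeff_eq_zero_of_natDegree_lt (lt_of_le_of_lt hUd h)]
        simp
    obtain ⟨c', hc'⟩ := ihk q' hq'd
    refine ⟨Fin.snoc c' a, ?_⟩
    rw [Fin.sum_univ_castSucc]
    have : ∀ i : Fin (k+1), (Fin.snoc c' a : Fin (k+2) → ℝ) i.castSucc • Polynomial.Chebyshev.U ℝ ((i.castSucc : ℕ) : ℤ)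
        = c' i • Polynomial.Chebyshev.U ℝ ((i : ℕ) : ℤ) := by
      intro i; rw [Fin.snoc_castSucc]; rfl
    rw [Finset.sum_congr rfl (fun i _ => this i)]
    simp only [Fin.snoc_last, Fin.val_last]
    rw [← hc', hq']
    ring



lemma integral_cos_int (j : ℤ) (hj : j ≠ 0) : (∫ x in (0:ℝ)..π, Real.cos (j * x)) = 0 := by
  have hj' : (j:ℝ) ≠ 0 := Int.cast_ne_zero.mpr hj
  have := intervalIntegral.integral_comp_mul_left (a := 0) (b := π) (fun x => Real.cos x) hj'
  simp only [mul_zero, integral_cos, Real.sin_zero, sub_zero] at this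
  rw [this, Real.sin_int_mul_pi]
  simp

lemma integral_sin_sin (m n : ℕ) :
    (∫ x in (0:ℝ)..π, Real.sin ((m+1) * x) * Real.sin ((n+1) * x)) =
      if m = n then π/2 else 0 := by
  have key : ∀ x : ℝ, Real.sin ((m+1) * x) * Real.sin ((n+1) * x)
      = (Real.cos ((((m:ℤ) - n) : ℤ) * x) - Real.cos ((((m:ℤ) + n + 2) : ℤ) * x)) / 2 := by
    intro x
    have h1 := Real.cos_sub (((m:ℝ)+1)*x) (((n:ℝ)+1)*x)
    have h2 := Real.cos_add (((m:ℝ)+1)*x) (((n:ℝ)+1)*x)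
    have e1 : (((m:ℤ) - n : ℤ) : ℝ) * x = ((m:ℝ)+1)*x - ((n:ℝ)+1)*x := by push_cast; ring
    have e2 : (((m:ℤ) + n + 2 : ℤ) : ℝ) * x = ((m:ℝ)+1)*x + ((n:ℝ)+1)*x := by push_cast; ring
    rw [e1, e2, h1, h2]; ring
  rw [intervalIntegral.integral_congr (fun x _ => key x)]
  have hint : ∀ j : ℤ, IntervalIntegrable (fun x => Real.cos (j * x)) MeasureTheory.volume 0 π := by
    intro j
    exact (Real.continuous_cos.comp (continuous_const.mul continuous_id)).intervalIntegrable _ _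
  have hsplit : (∫ x in (0:ℝ)..π, (Real.cos ((((m:ℤ) - n) : ℤ) * x) - Real.cos ((((m:ℤ) + n + 2) : ℤ) * x)) / 2)
      = ((∫ x in (0:ℝ)..π, Real.cos ((((m:ℤ) - n) : ℤ) * x)) - ∫ x in (0:ℝ)..π, Real.cos ((((m:ℤ) + n + 2) : ℤ) * x)) / 2 := by
    rw [intervalIntegral.integral_div, intervalIntegral.integral_sub (hint _) (hint _)]
  rw [hsplit, integral_cos_int ((m:ℤ) + n + 2) (by omega)]
  by_cases h : m = n
  · subst h
    simp only [sub_self, Int.cast_zero]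
    norm_num
  · rw [integral_cos_int ((m:ℤ) - n) (by omega)]
    simp [h]

lemma integral_sqrt_U_U (m n : ℕ) :
    (∫ u in (-1:ℝ)..1, Real.sqrt (1 - u^2) *
      ((Polynomial.Chebyshev.U ℝ (m:ℤ)).eval u * (Polynomial.Chebyshev.U ℝ (n:ℤ)).eval u)) =
      if m = n then π/2 else 0 := by
  have hF : Continuous fun u : ℝ => Real.sqrt (1 - u^2) *
      ((Polynomial.Chebyshev.U ℝ (m:ℤ)).eval u * (Polynomial.Chebyshev.U ℝ (n:ℤ)).eval u) := by
    exact (Real.continuous_sqrt.comp (by continuity)).mul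
      ((Polynomial.Chebyshev.U ℝ (m:ℤ)).continuous.mul (Polynomial.Chebyshev.U ℝ (n:ℤ)).continuous)
  have hsub := intervalIntegral.integral_comp_smul_deriv (a := π) (b := 0)
    (f := fun x => Real.cos x) (f' := fun x => -Real.sin x)
    (g := fun u : ℝ => Real.sqrt (1 - u^2) *
      ((Polynomial.Chebyshev.U ℝ (m:ℤ)).eval u * (Polynomial.Chebyshev.U ℝ (n:ℤ)).eval u))
    (fun x _ => Real.hasDerivAt_cos x) ((Real.continuous_sin.neg).continuousOn) hF
  simp only [Function.comp, Real.cos_pi, Real.cos_zero] at hsub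
  rw [← hsub, intervalIntegral.integral_symm, ← intervalIntegral.integral_neg]
  have hcongr : ∀ x ∈ Set.uIcc (0:ℝ) π,
      (fun x => -((-Real.sin x) • (Real.sqrt (1 - Real.cos x ^2) *
        ((Polynomial.Chebyshev.U ℝ (m:ℤ)).eval (Real.cos x) * (Polynomial.Chebyshev.U ℝ (n:ℤ)).eval (Real.cos x))))) x
      = Real.sin ((m+1) * x) * Real.sin ((n+1) * x) := by
    intro x hx
    rw [Set.uIcc_of_le Real.pi_nonneg] at hx
    have hs : Real.sin x ≥ 0 := Real.sin_nonneg_of_nonneg_of_le_pi hx.1 hx.2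
    have hsq : Real.sqrt (1 - Real.cos x ^ 2) = Real.sin x := by
      rw [show (1:ℝ) - Real.cos x ^2 = Real.sin x ^2 by
        have := Real.sin_sq_add_cos_sq x; linarith]
      exact Real.sqrt_sq hs
    have hm := Polynomial.Chebyshev.U_real_cos x (m : ℤ)
    have hn := Polynomial.Chebyshev.U_real_cos x (n : ℤ)
    push_cast at hm hn
    simp only [smul_eq_mul, hsq]
    rw [← hm, ← hn]; ring
  rw [show (∫ x in (0:ℝ)..π, -((-Real.sin x) • (Real.sqrt (1 - Real.cos x ^2) *
        ((Polynomial.Chebyshev.U ℝ (m:ℤ)).eval (Real.cos x) * (Polynomial.Chebyshev.U ℝ (n:ℤ)).eval (Real.cos x)))))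
      = ∫ x in (0:ℝ)..π, Real.sin ((m+1) * x) * Real.sin ((n+1) * x) from
    intervalIntegral.integral_congr hcongr]
  exact integral_sin_sin m n



lemma aeval_eq_eval (v : Fin 2 → ℝ) (p : MvPolynomial (Fin 2) ℝ) :
    MvPolynomial.aeval v p = MvPolynomial.eval v p := by
  rw [MvPolynomial.aeval_def, Algebra.algebraMap_self]; rfl

lemma totalDegree_bind₁_le (f : Fin 2 → MvPolynomial (Fin 2) ℝ)
    (hf : ∀ i, (f i).totalDegree ≤ 1) (p : MvPolynomial (Fin 2) ℝ) :
    (MvPolynomial.bind₁ f p).totalDegree ≤ p.totalDegree := by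
  conv_lhs => rw [← MvPolynomial.support_sum_monomial_coeff p]
  rw [map_sum]
  refine le_trans (MvPolynomial.totalDegree_finset_sum _ _) (Finset.sup_le fun d hd => ?_)
  rw [MvPolynomial.bind₁_monomial]
  refine le_trans (MvPolynomial.totalDegree_mul _ _) ?_
  rw [MvPolynomial.totalDegree_C, zero_add]
  refine le_trans (MvPolynomial.totalDegree_finset_prod _ _) ?_
  refine le_trans ?_ (MvPolynomial.le_totalDegree hd)
  rw [Finsupp.sum]
  refine Finset.sum_le_sum fun i _ => ?_
  calc (f i ^ d i).totalDegree ≤ d i * (f i).totalDegree := MvPolynomial.totalDegree_pow _ _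
    _ ≤ d i * 1 := Nat.mul_le_mul_left _ (hf i)
    _ = d i := Nat.mul_one _

lemma totalDegree_paeval_le (l : MvPolynomial (Fin 2) ℝ) (hl : l.totalDegree ≤ 1)
    (u : Polynomial ℝ) : (Polynomial.aeval l u).totalDegree ≤ u.natDegree := by
  rw [Polynomial.aeval_eq_sum_range]
  refine le_trans (MvPolynomial.totalDegree_finset_sum _ _) (Finset.sup_le fun i hi => ?_)
  refine le_trans (MvPolynomial.totalDegree_smul_le _ _) ?_
  refine le_trans (MvPolynomial.totalDegree_pow _ _) ?_
  have hi' := Finset.mem_range.mp hi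
  calc i * l.totalDegree ≤ i * 1 := Nat.mul_le_mul_left _ hl
    _ = i := Nat.mul_one _
    _ ≤ u.natDegree := by omega

lemma continuous_evalPoly (P : MvPolynomial (Fin 2) ℝ) : Continuous (evalPoly P) := by
  unfold evalPoly
  have h : (fun p : ℝ × ℝ => MvPolynomial.eval ![p.1, p.2] P)
      = fun p : ℝ × ℝ => ∑ d ∈ P.support, MvPolynomial.coeff d P * (p.1 ^ d 0 * p.2 ^ d 1) := by
    funext p
    rw [MvPolynomial.eval_eq']
    refine Finset.sum_congr rfl fun d _ => ?_
    rw [Fin.prod_univ_two]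
    simp [Matrix.cons_val_zero, Matrix.cons_val_one, Matrix.head_cons]
  rw [h]
  exact continuous_finset_sum _ fun d _ =>
    continuous_const.mul ((continuous_fst.pow _).mul (continuous_snd.pow _))

noncomputable def rotL (c s : ℝ) : ℝ × ℝ →ₗ[ℝ] ℝ × ℝ where
  toFun p := (c * p.1 - s * p.2, s * p.1 + c * p.2)
  map_add' p q := by
    simp only [Prod.fst_add, Prod.snd_add, Prod.mk_add_mk, Prod.mk.injEq]
    constructor <;> ring
  map_smul' r p := by
    simp only [Prod.smul_fst, Prod.smul_snd, RingHom.id_apply, Prod.smul_mk, smul_eq_mul,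
      Prod.mk.injEq]
    constructor <;> ring

lemma rotL_det (c s : ℝ) : LinearMap.det (rotL c s) = c ^ 2 + s ^ 2 := by
  rw [← LinearMap.det_toMatrix (Module.Basis.finTwoProd ℝ), Matrix.det_fin_two]
  simp only [LinearMap.toMatrix_apply, Module.Basis.finTwoProd_zero, Module.Basis.finTwoProd_one,
    Module.Basis.coe_finTwoProd_repr, rotL, LinearMap.coe_mk, AddHom.coe_mk]
  simp only [Matrix.cons_val_zero, Matrix.cons_val_one, Matrix.head_cons]
  ring

lemma rot_measurePreserving (c s : ℝ) (h : c ^ 2 + s ^ 2 = 1) :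
    MeasurePreserving (rotL c s) volume volume := by
  have hdet : LinearMap.det (rotL c s) ≠ 0 := by rw [rotL_det, h]; norm_num
  refine ⟨(rotL c s).continuous_of_finiteDimensional.measurable, ?_⟩
  have hmap := Measure.map_linearMap_addHaar_eq_smul_addHaar volume hdet
  rw [rotL_det, h] at hmap
  simpa using hmap

noncomputable def rotE (c s : ℝ) (h : c ^ 2 + s ^ 2 = 1) : (ℝ × ℝ) ≃ₗ[ℝ] (ℝ × ℝ) :=
  LinearEquiv.ofLinear (rotL c s) (rotL c (-s))
    (by
      refine LinearMap.ext fun p => ?_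
      simp only [LinearMap.coe_comp, Function.comp_apply, rotL, LinearMap.coe_mk, AddHom.coe_mk,
        LinearMap.id_apply]
      obtain ⟨x, y⟩ := p
      simp only [Prod.mk.injEq]
      constructor
      · linear_combination x * h
      · linear_combination y * h)
    (by
      refine LinearMap.ext fun p => ?_
      simp only [LinearMap.coe_comp, Function.comp_apply, rotL, LinearMap.coe_mk, AddHom.coe_mk,
        LinearMap.id_apply]
      obtain ⟨x, y⟩ := p
      simp only [Prod.mk.injEq]
      constructor
      · linear_combination x * h
      · linear_combination y * h)

lemma rot_measurableEmbedding (c s : ℝ) (h : c ^ 2 + s ^ 2 = 1) :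
    MeasurableEmbedding (rotL c s) := by
  have : MeasurableEmbedding ((rotE c s h).toContinuousLinearEquiv.toHomeomorph.toMeasurableEquiv) :=
    MeasurableEquiv.measurableEmbedding _
  convert this using 1
  rfl

lemma disk_fubini (F : ℝ × ℝ → ℝ) (hF : Continuous F) :
    (∫ p in {p : ℝ × ℝ | p.1 ^ 2 + p.2 ^ 2 ≤ 1}, F p)
      = ∫ t in Set.Ioo (-1 : ℝ) 1,
          ∫ s in Set.Ioo (-Real.sqrt (1 - t ^ 2)) (Real.sqrt (1 - t ^ 2)), F (t, s) := by
  set D := {p : ℝ × ℝ | p.1 ^ 2 + p.2 ^ 2 ≤ 1} with hD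
  have hDclosed : IsClosed D := isClosed_le (by continuity) continuous_const
  have hDmeas : MeasurableSet D := hDclosed.measurableSet
  have hDcomp : IsCompact D := by
    refine (isCompact_Icc (a := ((-1 : ℝ), (-1 : ℝ))) (b := ((1 : ℝ), (1 : ℝ)))).of_isClosed_subset
      hDclosed ?_
    rintro ⟨x, y⟩ hxy
    simp only [hD, Set.mem_setOf_eq] at hxy
    constructor
    · constructor <;> simp <;> nlinarith
    · constructor <;> simp <;> nlinarith
  have hInt : IntegrableOn F D := hF.continuousOn.integrableOn_compact hDcomp
  rw [← MeasureTheory.integral_indicator hDmeas]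
  rw [MeasureTheory.Measure.volume_eq_prod]
  rw [MeasureTheory.integral_prod _ ((MeasureTheory.integrable_indicator_iff hDmeas).2
      (by rw [← MeasureTheory.Measure.volume_eq_prod]
          exact hInt))]
  have hinner : ∀ t : ℝ, (∫ s : ℝ, Set.indicator D F (t, s))
      = ∫ s in Set.Ioo (-Real.sqrt (1 - t ^ 2)) (Real.sqrt (1 - t ^ 2)), F (t, s) := by
    intro t
    have hmeasS : MeasurableSet {s : ℝ | s ^ 2 ≤ 1 - t ^ 2} :=
      (isClosed_le (by continuity) continuous_const).measurableSet
    have h1 : (fun s : ℝ => Set.indicator D F (t, s))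
        = Set.indicator {s : ℝ | s ^ 2 ≤ 1 - t ^ 2} (fun s => F (t, s)) := by
      funext s
      simp only [Set.indicator_apply, hD, Set.mem_setOf_eq]
      refine if_congr ?_ rfl rfl
      constructor <;> intro <;> linarith
    rw [h1, MeasureTheory.integral_indicator hmeasS]
    by_cases hle : 1 - t ^ 2 < 0
    · have he : {s : ℝ | s ^ 2 ≤ 1 - t ^ 2} = (∅ : Set ℝ) := by
        ext s; simp only [Set.mem_setOf_eq, Set.mem_empty_iff_false, iff_false]; nlinarith
      have hz : Real.sqrt (1 - t ^ 2) = 0 := Real.sqrt_eq_zero_of_nonpos (le_of_lt hle)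
      rw [he, hz]
      simp
    · push_neg at hle
      have hset : {s : ℝ | s ^ 2 ≤ 1 - t ^ 2}
          = Set.Icc (-Real.sqrt (1 - t ^ 2)) (Real.sqrt (1 - t ^ 2)) := by
        ext s
        simp only [Set.mem_setOf_eq, Set.mem_Icc, ← abs_le]
        constructor
        · intro hs
          rw [← Real.sqrt_sq_eq_abs]
          exact Real.sqrt_le_sqrt hs
        · intro hs
          have h2 := Real.sq_sqrt hle
          nlinarith [sq_abs s, abs_nonneg s]
      rw [hset, MeasureTheory.integral_Icc_eq_integral_Ioo]
  have houter : (∫ t : ℝ, ∫ s : ℝ, Set.indicator D F (t, s))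
      = ∫ t : ℝ, (fun t : ℝ => ∫ s in Set.Ioo (-Real.sqrt (1 - t ^ 2)) (Real.sqrt (1 - t ^ 2)), F (t, s)) t := by
    congr 1
    funext t
    exact hinner t
  rw [houter]
  refine (MeasureTheory.setIntegral_eq_integral_of_forall_compl_eq_zero fun t htc => ?_).symm
  simp only [Set.mem_Ioo, not_and_or, not_lt] at htc
  have hz : Real.sqrt (1 - t ^ 2) = 0 := by
    apply Real.sqrt_eq_zero_of_nonpos
    rcases htc with h | h <;> nlinarith
  rw [hz]
  simp


end MarrAux

set_option maxHeartbeats 1000000 in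
theorem radon_orthogonal_poly (k : ℕ) (P : MvPolynomial (Fin 2) ℝ)
    (hdeg : P.totalDegree = k)
    (horth : ∀ Q : MvPolynomial (Fin 2) ℝ, Q.totalDegree < k →
      ∫ p in {p : ℝ × ℝ | p.1 ^ 2 + p.2 ^ 2 ≤ 1}, evalPoly P p * evalPoly Q p = 0)
    (t : ℝ) (ht : t ∈ Set.Ioo (-1 : ℝ) 1) (θ : ℝ) (hθ : θ ∈ Set.Icc (0 : ℝ) (2 * π)) :
    radon (evalPoly P) θ t =
      (2 / (k + 1)) * Real.sqrt (1 - t ^ 2) * chebU k t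
        * evalPoly P (Real.cos θ, Real.sin θ) := by
  obtain ⟨ht1, ht2⟩ := ht
  have hcs : Real.cos θ ^ 2 + Real.sin θ ^ 2 = 1 := Real.cos_sq_add_sin_sq θ
  -- the substituted polynomial G(u, v) = P(rot(u,v))
  set f : Fin 2 → MvPolynomial (Fin 2) ℝ :=
    ![MvPolynomial.C (Real.cos θ) * MvPolynomial.X 0
        + MvPolynomial.C (-Real.sin θ) * MvPolynomial.X 1,
      MvPolynomial.C (Real.sin θ) * MvPolynomial.X 0
        + MvPolynomial.C (Real.cos θ) * MvPolynomial.X 1] with hf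
  set G := MvPolynomial.bind₁ f P with hG
  have hGdeg : G.totalDegree ≤ k := by
    rw [hG, ← hdeg]
    refine MarrAux.totalDegree_bind₁_le f (fun i => ?_) P
    fin_cases i <;>
    · simp only [hf, Matrix.cons_val_zero, Matrix.cons_val_one, Matrix.head_cons]
      refine le_trans (MvPolynomial.totalDegree_add _ _) (max_le ?_ ?_) <;>
      · refine le_trans (MvPolynomial.totalDegree_mul _ _) ?_
        simp [MvPolynomial.totalDegree_C, MvPolynomial.totalDegree_X]
  have hrotapp : ∀ u v : ℝ, (MarrAux.rotL (Real.cos θ) (Real.sin θ)) (u, v)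
      = (Real.cos θ * u - Real.sin θ * v, Real.sin θ * u + Real.cos θ * v) := by
    intro u v; rfl
  have hGeval : ∀ u v : ℝ,
      evalPoly P ((MarrAux.rotL (Real.cos θ) (Real.sin θ)) (u, v))
        = MvPolynomial.eval ![u, v] G := by
    intro u v
    rw [hrotapp]
    show MvPolynomial.eval ![(Real.cos θ * u - Real.sin θ * v, Real.sin θ * u + Real.cos θ * v).1,
      (Real.cos θ * u - Real.sin θ * v, Real.sin θ * u + Real.cos θ * v).2] P
      = MvPolynomial.eval ![u, v] G
    rw [hG, ← MarrAux.aeval_eq_eval (![u,v]), MvPolynomial.aeval_bind₁,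
      ← MarrAux.aeval_eq_eval]
    refine congrFun (congrArg _ (congrArg _ ?_)) P
    funext i
    fin_cases i <;>
      simp [hf, MarrAux.aeval_eq_eval] <;>
      ring
  -- the one-variable polynomial q
  set q : Polynomial ℝ := ∑ d ∈ G.support,
    if Even (d 1) then
      ((2 : ℝ) / ((d 1 : ℝ) + 1) * MvPolynomial.coeff d G) •
        (Polynomial.X ^ (d 0) * ((1 : Polynomial ℝ) - Polynomial.X ^ 2) ^ (d 1 / 2))
    else 0 with hqdef
  -- Step A: the chord integral equals √(1-u²) q(u)
  have hq : ∀ u : ℝ, -1 ≤ u → u ≤ 1 →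
      (∫ v in Set.Ioo (-Real.sqrt (1 - u ^ 2)) (Real.sqrt (1 - u ^ 2)),
          evalPoly P ((MarrAux.rotL (Real.cos θ) (Real.sin θ)) (u, v)))
        = Real.sqrt (1 - u ^ 2) * Polynomial.eval u q := by
    intro u hu1 hu2
    have h1u : (0:ℝ) ≤ 1 - u ^ 2 := by nlinarith
    have ha0 : 0 ≤ Real.sqrt (1 - u ^ 2) := Real.sqrt_nonneg _
    have ha2 : Real.sqrt (1 - u ^ 2) ^ 2 = 1 - u ^ 2 := Real.sq_sqrt h1u
    have hexp : ∀ v : ℝ, evalPoly P ((MarrAux.rotL (Real.cos θ) (Real.sin θ)) (u, v))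
        = ∑ d ∈ G.support, MvPolynomial.coeff d G * (u ^ d 0 * v ^ d 1) := by
      intro v
      rw [hGeval u v, MvPolynomial.eval_eq']
      refine Finset.sum_congr rfl fun d _ => ?_
      rw [Fin.prod_univ_two]
      simp
    rw [← MeasureTheory.integral_Ioc_eq_integral_Ioo,
      ← intervalIntegral.integral_of_le (by linarith : -Real.sqrt (1 - u ^ 2) ≤ Real.sqrt (1 - u ^ 2))]
    rw [intervalIntegral.integral_congr (fun v _ => hexp v)]
    rw [intervalIntegral.integral_finset_sum (f := fun d v => MvPolynomial.coeff d G * (u ^ d 0 * v ^ d 1)) (fun d _ =>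
      (Continuous.intervalIntegrable (continuous_const.mul
        (continuous_const.mul (continuous_pow _))) _ _))]
    rw [hqdef, Polynomial.eval_finset_sum, Finset.mul_sum]
    refine Finset.sum_congr rfl fun d _ => ?_
    have hsingle : (fun v : ℝ => MvPolynomial.coeff d G * (u ^ d 0 * v ^ d 1))
        = fun v : ℝ => (MvPolynomial.coeff d G * u ^ d 0) * v ^ d 1 := by
      funext v; ring
    rw [hsingle, intervalIntegral.integral_const_mul, integral_pow]
    rcases Nat.even_or_odd (d 1) with hev | hodd
    · obtain ⟨j, hj⟩ := hev
      have hj2 : d 1 = 2 * j := by omega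
      have hdiv : d 1 / 2 = j := by omega
      have hoddpow : (-Real.sqrt (1 - u ^ 2)) ^ (d 1 + 1)
          = -(Real.sqrt (1 - u ^ 2) ^ (d 1 + 1)) := by
        refine Odd.neg_pow ?_ _
        exact ⟨j, by omega⟩
      have hpow : Real.sqrt (1 - u ^ 2) ^ (d 1 + 1)
          = (1 - u ^ 2) ^ j * Real.sqrt (1 - u ^ 2) := by
        rw [hj2, pow_succ, pow_mul, ha2]
      rw [if_pos ⟨j, hj⟩, hoddpow, hpow, Polynomial.eval_smul, hdiv]
      simp only [Polynomial.eval_mul, Polynomial.eval_pow, Polynomial.eval_sub,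
        Polynomial.eval_one, Polynomial.eval_X, smul_eq_mul]
      have hne : ((d 1 : ℝ) + 1) ≠ 0 := by positivity
      field_simp
      ring
    · obtain ⟨j, hj⟩ := hodd
      have hevenpow : (-Real.sqrt (1 - u ^ 2)) ^ (d 1 + 1)
          = Real.sqrt (1 - u ^ 2) ^ (d 1 + 1) := by
        refine Even.neg_pow ⟨j + 1, by omega⟩ _
      rw [hevenpow, if_neg (by simp [hj, parity_simps])]
      simp
  -- Step A': q has degree at most k
  have hqdeg : q.natDegree ≤ k := by
    rw [hqdef]
    refine Polynomial.natDegree_sum_le_of_forall_le _ _ fun d hd => ?_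
    have hd' : d 0 + d 1 ≤ k := by
      have h1 := MvPolynomial.le_totalDegree hd
      have hsum : (d.sum fun _ e => e) = d 0 + d 1 := by
        rw [Finsupp.sum_fintype _ _ (fun i => rfl), Fin.sum_univ_two]
      omega
    split_ifs
    · refine le_trans (Polynomial.natDegree_smul_le _ _) ?_
      refine le_trans (Polynomial.natDegree_mul_le) ?_
      have h1 : (Polynomial.X ^ (d 0) : Polynomial ℝ).natDegree ≤ d 0 :=
        Polynomial.natDegree_pow_le.trans (by simp)
      have h2 : (((1 : Polynomial ℝ) - Polynomial.X ^ 2) ^ (d 1 / 2)).natDegree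
          ≤ (d 1 / 2) * 2 := by
        refine le_trans (Polynomial.natDegree_pow_le) ?_
        refine Nat.mul_le_mul_left _ ?_
        refine le_trans (Polynomial.natDegree_sub_le _ _) ?_
        simp
      have := Nat.div_mul_le_self (d 1) 2
      omega
    · simp
  -- Step A'': value of q at 1
  have hPc : evalPoly P (Real.cos θ, Real.sin θ) = MvPolynomial.eval ![(1:ℝ), 0] G := by
    have h := hGeval 1 0
    rw [hrotapp] at h
    rw [← h]
    norm_num
  have hq1 : Polynomial.eval 1 q = 2 * evalPoly P (Real.cos θ, Real.sin θ) := by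
    rw [hPc, MvPolynomial.eval_eq', hqdef, Polynomial.eval_finset_sum, Finset.mul_sum]
    refine Finset.sum_congr rfl fun d _ => ?_
    rw [Fin.prod_univ_two]
    simp only [Matrix.cons_val_zero, Matrix.cons_val_one, Matrix.head_cons, one_pow]
    rcases Nat.eq_zero_or_pos (d 1) with h0 | hpos
    · rw [h0]
      norm_num
    · split_ifs with hev
      · obtain ⟨j, hj⟩ := hev
        have hjpos : 0 < j := by omega
        rw [Polynomial.eval_smul]
        simp only [Polynomial.eval_mul, Polynomial.eval_pow, Polynomial.eval_sub,
          Polynomial.eval_one, Polynomial.eval_X, smul_eq_mul, one_pow]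
        rw [show ((1:ℝ) - 1) = 0 by ring, zero_pow (by omega : d 1 / 2 ≠ 0),
          zero_pow (by omega : d 1 ≠ 0)]
        ring
      · rw [zero_pow (by omega : d 1 ≠ 0)]
        simp
  -- Step B: moment integrals vanish
  have hmom : ∀ m : ℕ, m < k →
      (∫ u in (-1:ℝ)..1, Real.sqrt (1 - u ^ 2) *
        (Polynomial.eval u q * Polynomial.eval u (Polynomial.Chebyshev.U ℝ (m:ℤ)))) = 0 := by
    intro m hm
    set l : MvPolynomial (Fin 2) ℝ := MvPolynomial.C (Real.cos θ) * MvPolynomial.X 0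
      + MvPolynomial.C (Real.sin θ) * MvPolynomial.X 1 with hl
    set Qm := Polynomial.aeval l (Polynomial.Chebyshev.U ℝ (m:ℤ)) with hQm
    have hldeg : l.totalDegree ≤ 1 := by
      refine le_trans (MvPolynomial.totalDegree_add _ _) (max_le ?_ ?_) <;>
      · refine le_trans (MvPolynomial.totalDegree_mul _ _) ?_
        simp [MvPolynomial.totalDegree_C, MvPolynomial.totalDegree_X]
    have hQdeg : Qm.totalDegree < k :=
      lt_of_le_of_lt (le_trans (MarrAux.totalDegree_paeval_le l hldeg _)
        (MarrAux.U_coeff_natDegree m).1) hm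
    have hQmeval : ∀ p : ℝ × ℝ, evalPoly Qm p
        = Polynomial.eval (Real.cos θ * p.1 + Real.sin θ * p.2)
            (Polynomial.Chebyshev.U ℝ (m:ℤ)) := by
      intro p
      rw [hQm]
      unfold evalPoly
      rw [← MarrAux.aeval_eq_eval]
      rw [← Polynomial.aeval_algHom_apply]
      rw [show (MvPolynomial.aeval ![p.1, p.2]) l = Real.cos θ * p.1 + Real.sin θ * p.2 by
        simp [hl, MarrAux.aeval_eq_eval]]
      rw [Polynomial.aeval_def, Algebra.algebraMap_self]
      rfl
    have h0 := horth Qm hQdeg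
    have hE : Continuous fun p : ℝ × ℝ => evalPoly P p * evalPoly Qm p :=
      (MarrAux.continuous_evalPoly P).mul (MarrAux.continuous_evalPoly Qm)
    have hpre : (MarrAux.rotL (Real.cos θ) (Real.sin θ)) ⁻¹'
        {p : ℝ × ℝ | p.1 ^ 2 + p.2 ^ 2 ≤ 1} = {p : ℝ × ℝ | p.1 ^ 2 + p.2 ^ 2 ≤ 1} := by
      ext ⟨x, y⟩
      have hnorm : (Real.cos θ * x - Real.sin θ * y) ^ 2
          + (Real.sin θ * x + Real.cos θ * y) ^ 2 = x ^ 2 + y ^ 2 := by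
        linear_combination (x ^ 2 + y ^ 2) * hcs
      simp only [Set.mem_preimage, Set.mem_setOf_eq, hrotapp, hnorm]
    have hrotint := (MarrAux.rot_measurePreserving (Real.cos θ) (Real.sin θ) hcs).setIntegral_preimage_emb
      (MarrAux.rot_measurableEmbedding (Real.cos θ) (Real.sin θ) hcs)
      (fun p => evalPoly P p * evalPoly Qm p) {p : ℝ × ℝ | p.1 ^ 2 + p.2 ^ 2 ≤ 1}
    rw [hpre, h0] at hrotint
    have hfub := MarrAux.disk_fubini
      (fun p => evalPoly P ((MarrAux.rotL (Real.cos θ) (Real.sin θ)) p)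
        * evalPoly Qm ((MarrAux.rotL (Real.cos θ) (Real.sin θ)) p))
      (hE.comp (MarrAux.rotL (Real.cos θ) (Real.sin θ)).continuous_of_finiteDimensional)
    rw [hrotint] at hfub
    have hdouble : (∫ u in Set.Ioo (-1:ℝ) 1,
        ∫ v in Set.Ioo (-Real.sqrt (1 - u ^ 2)) (Real.sqrt (1 - u ^ 2)),
          evalPoly P ((MarrAux.rotL (Real.cos θ) (Real.sin θ)) (u, v))
            * evalPoly Qm ((MarrAux.rotL (Real.cos θ) (Real.sin θ)) (u, v)))
        = ∫ u in Set.Ioo (-1:ℝ) 1, Real.sqrt (1 - u ^ 2) *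
            (Polynomial.eval u q * Polynomial.eval u (Polynomial.Chebyshev.U ℝ (m:ℤ))) := by
      refine MeasureTheory.setIntegral_congr_fun measurableSet_Ioo fun u hu => ?_
      have hinner : ∀ v : ℝ,
          evalPoly P ((MarrAux.rotL (Real.cos θ) (Real.sin θ)) (u, v))
            * evalPoly Qm ((MarrAux.rotL (Real.cos θ) (Real.sin θ)) (u, v))
          = evalPoly P ((MarrAux.rotL (Real.cos θ) (Real.sin θ)) (u, v))
            * Polynomial.eval u (Polynomial.Chebyshev.U ℝ (m:ℤ)) := by
        intro v
        rw [hQmeval, hrotapp]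
        congr 2
        simp only
        linear_combination u * hcs
      rw [MeasureTheory.setIntegral_congr_fun measurableSet_Ioo (fun v _ => hinner v),
        MeasureTheory.integral_mul_const, hq u (le_of_lt hu.1) (le_of_lt hu.2)]
      ring
    rw [hdouble] at hfub
    rw [intervalIntegral.integral_of_le (by norm_num : (-1:ℝ) ≤ 1),
      MeasureTheory.integral_Ioc_eq_integral_Ioo]
    exact hfub.symm
  -- Step C: expand q in the U basis
  obtain ⟨co, hco⟩ := MarrAux.exists_U_expansion k q hqdeg
  have hUU : ∀ i : Fin (k+1), ∀ m : ℕ,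
      (∫ u in (-1:ℝ)..1, Real.sqrt (1 - u ^ 2) *
        (Polynomial.eval u q * Polynomial.eval u (Polynomial.Chebyshev.U ℝ (m:ℤ))))
      = ∑ j : Fin (k+1), co j * (if (j:ℕ) = m then π/2 else 0) := by
    intro i m
    have hptwise : ∀ u : ℝ, Real.sqrt (1 - u ^ 2) *
        (Polynomial.eval u q * Polynomial.eval u (Polynomial.Chebyshev.U ℝ (m:ℤ)))
        = ∑ j : Fin (k+1), co j * (Real.sqrt (1 - u ^ 2) *
            (Polynomial.eval u (Polynomial.Chebyshev.U ℝ ((j:ℕ):ℤ))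
              * Polynomial.eval u (Polynomial.Chebyshev.U ℝ (m:ℤ)))) := by
      intro u
      rw [hco, Polynomial.eval_finset_sum, Finset.sum_mul, Finset.mul_sum]
      refine Finset.sum_congr rfl fun j _ => ?_
      rw [Polynomial.eval_smul]
      simp only [smul_eq_mul]
      ring
    rw [intervalIntegral.integral_congr (fun u _ => hptwise u)]
    rw [intervalIntegral.integral_finset_sum (fun j _ => Continuous.intervalIntegrable
      (by exact continuous_const.mul ((Real.continuous_sqrt.comp
        (continuous_const.sub (continuous_pow 2))).mul
        (((Polynomial.Chebyshev.U ℝ ((j:ℕ):ℤ)).continuous).mul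
          ((Polynomial.Chebyshev.U ℝ (m:ℤ)).continuous)))) _ _)]
    refine Finset.sum_congr rfl fun j _ => ?_
    rw [intervalIntegral.integral_const_mul, MarrAux.integral_sqrt_U_U]
  have hzero : ∀ i : Fin (k+1), (i:ℕ) < k → co i = 0 := by
    intro i hi
    have h1 := hmom i hi
    rw [hUU i i] at h1
    have h2 : (∑ j : Fin (k+1), co j * (if (j:ℕ) = (i:ℕ) then π/2 else 0)) = co i * (π/2) := by
      rw [Finset.sum_eq_single i
        (fun j _ hji => by rw [if_neg (fun h => hji (Fin.val_injective h)), mul_zero])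
        (fun h => absurd (Finset.mem_univ i) h)]
      simp
    rw [h2] at h1
    have hπ : π / 2 ≠ 0 := by positivity
    exact (mul_eq_zero.mp h1).resolve_right hπ
  have hqU : q = co (Fin.last k) • Polynomial.Chebyshev.U ℝ (k:ℤ) := by
    rw [hco, Fin.sum_univ_castSucc]
    have hzz : ∀ i : Fin k, co i.castSucc •
        Polynomial.Chebyshev.U ℝ ((i.castSucc : ℕ):ℤ) = 0 := by
      intro i
      rw [hzero i.castSucc (by simpa using i.isLt)]
      simp
    rw [Finset.sum_congr rfl (fun i _ => hzz i)]
    simp [Fin.val_last]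
  have hck : co (Fin.last k) * ((k:ℝ) + 1) = 2 * evalPoly P (Real.cos θ, Real.sin θ) := by
    have h1 : Polynomial.eval 1 q = co (Fin.last k) * ((k:ℝ) + 1) := by
      rw [hqU, Polynomial.eval_smul, MarrAux.U_eval_one k, smul_eq_mul]
    rw [← h1, hq1]
  -- conclusion
  have hradon : radon (evalPoly P) θ t
      = ∫ v in Set.Ioo (-Real.sqrt (1 - t ^ 2)) (Real.sqrt (1 - t ^ 2)),
          evalPoly P ((MarrAux.rotL (Real.cos θ) (Real.sin θ)) (t, v)) := by
    rw [radon]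
    refine MeasureTheory.setIntegral_congr_fun measurableSet_Ioo fun v _ => ?_
    rw [hrotapp]
    congr 1
    rw [Prod.mk.injEq]
    constructor <;> ring
  rw [hradon, hq t (le_of_lt ht1) (le_of_lt ht2), hqU, Polynomial.eval_smul, smul_eq_mul]
  have hk1 : ((k:ℝ) + 1) ≠ 0 := by positivity
  have hcoval : co (Fin.last k) = 2 * evalPoly P (Real.cos θ, Real.sin θ) / ((k:ℝ) + 1) := by
    field_simp
    linarith [hck]
  rw [hcoval, chebU]
  field_simp
end
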